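/- arXiv:1112.4239 — 3 statements merged into one kernel-verified Lean document; each statement's English description precedes it below -/
import Mathlib

section
/- Let G be a Hausdorff, totally disconnected, locally compact topological group, α a topological group automorphism of G, and N a compact α-stable subgroup of G with nub(α) ⊆ N. Then for every open subset U of G with N ⊆ U there is a compact open subgroup V of G that is tidy for α and satisfies N ⊆ V ⊆ U. -/
open Pointwise Filter Topology

variable {G : Type*}

/-- `V₊ = ⋂_{k ≥ 0} α^k(V)`. -/
def plusPart [Group G] (α : MulAut G) (V : Set G) : Set G :=
  ⋂ k : ℕ, ⇑(α ^ k) '' V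

/-- `V₋ = ⋂_{k ≥ 0} α^{-k}(V)`. -/
def minusPart [Group G] (α : MulAut G) (V : Set G) : Set G :=
  ⋂ k : ℕ, ⇑(α⁻¹ ^ k) '' V

/-- `V` is tidy above for `α` if `V = V₊V₋`. -/
def TidyAbove [Group G] (α : MulAut G) (V : Set G) : Prop :=
  V = plusPart α V * minusPart α V

/-- `V` is tidy below for `α` if `V₊₊` and `V₋₋` are closed. -/
def TidyBelow [Group G] [TopologicalSpace G] (α : MulAut G) (V : Set G) : Prop :=
  IsClosed (⋃ k : ℕ, ⇑(α ^ k) '' plusPart α V) ∧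
  IsClosed (⋃ k : ℕ, ⇑(α⁻¹ ^ k) '' minusPart α V)

/-- `V` is tidy for `α` if it is tidy above and tidy below. -/
def Tidy [Group G] [TopologicalSpace G] (α : MulAut G) (V : Set G) : Prop :=
  TidyAbove α V ∧ TidyBelow α V

/-- The nub of `α`: the intersection of all compact open subgroups tidy for `α`. -/
def nub [Group G] [TopologicalSpace G] (α : MulAut G) : Subgroup G :=
  ⨅ V ∈ {V : Subgroup G | IsCompact (V : Set G) ∧ IsOpen (V : Set G) ∧ Tidy α (V : Set G)}, V

/-- The contraction group `con(α) = { x | α^n(x) → 1 as n → ∞ }`. -/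
def conSet [Group G] [TopologicalSpace G] (α : MulAut G) : Set G :=
  {x : G | Tendsto (fun n : ℕ => (α ^ n) x) atTop (𝓝 1)}

/-- The homoclinic (two-sided contraction) group `bcg(α) = con(α) ∩ con(α⁻¹)`. -/
def bcgSet [Group G] [TopologicalSpace G] (α : MulAut G) : Set G :=
  conSet α ∩ conSet α⁻¹

/-- The bounded contraction group `bcon(α)`. -/
def bconSet [Group G] [TopologicalSpace G] (α : MulAut G) : Set G :=
  {x ∈ conSet α | IsCompact (closure (Set.range fun n : ℕ => (α⁻¹ ^ n) x))}

/-- Image of a subgroup under an automorphism. -/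
def mapAut [Group G] (α : MulAut G) (V : Subgroup G) : Subgroup G where
  carrier := ⇑α '' (V : Set G)
  one_mem' := ⟨1, V.one_mem, map_one α⟩
  mul_mem' := by
    rintro a b ⟨a', ha, rfl⟩ ⟨b', hb, rfl⟩
    exact ⟨a' * b', V.mul_mem ha hb, map_mul α a' b'⟩
  inv_mem' := by
    rintro a ⟨a', ha, rfl⟩
    exact ⟨a'⁻¹, V.inv_mem ha, map_inv α a'⟩

/-- `V₊` as a subgroup. -/
def plusSub [Group G] (α : MulAut G) (V : Subgroup G) : Subgroup G :=
  ⨅ k : ℕ, mapAut (α ^ k) V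

/-- `V₋` as a subgroup. -/
def minusSub [Group G] (α : MulAut G) (V : Subgroup G) : Subgroup G :=
  ⨅ k : ℕ, mapAut (α⁻¹ ^ k) V

/-- The shift automorphism of `F^ℤ`. -/
def shiftAut (F : Type*) [Group F] : MulAut (ℤ → F) where
  toFun f := fun n => f (n + 1)
  invFun f := fun n => f (n - 1)
  left_inv f := by funext n; show f (n - 1 + 1) = f n; congr 1; omega
  right_inv f := by funext n; show f (n + 1 - 1) = f n; congr 1; omega
  map_mul' f g := rfl


/-! ### Auxiliary development for the proof -/

section Helpers

variable [Group G]

lemma mem_autImage {β : MulAut G} {V : Set G} {x : G} :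
    x ∈ ⇑β '' V ↔ β⁻¹ x ∈ V := by
  constructor
  · rintro ⟨v, hv, rfl⟩
    simpa using hv
  · intro h
    exact ⟨β⁻¹ x, h, by simp⟩

lemma autImage_eq_preimage (β : MulAut G) (V : Set G) : ⇑β '' V = ⇑β⁻¹ ⁻¹' V := by
  ext x; rw [mem_autImage, Set.mem_preimage]

lemma autApply_mem_autImage {β γ : MulAut G} {V : Set G} {x : G} (h : x ∈ ⇑γ '' V) :
    β x ∈ ⇑(β * γ) '' V := by
  rw [mem_autImage] at h ⊢
  simpa [mul_inv_rev, MulAut.mul_apply] using h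

lemma npow_inv_eq (β : MulAut G) (k : ℕ) : (β ^ k)⁻¹ = β ^ (-(k : ℤ)) := by
  rw [zpow_neg, zpow_natCast]

lemma inv_npow_eq (β : MulAut G) (k : ℕ) : β⁻¹ ^ k = β ^ (-(k : ℤ)) := by
  rw [inv_pow, zpow_neg, zpow_natCast]

lemma zpow_apply_zpow_apply (β : MulAut G) (a b : ℤ) (x : G) :
    (β ^ a) ((β ^ b) x) = (β ^ (a + b)) x := by
  rw [zpow_add, MulAut.mul_apply]

lemma mem_plusPart_iff {β : MulAut G} {V : Set G} {x : G} :
    x ∈ plusPart β V ↔ ∀ k : ℕ, (β ^ (-(k : ℤ))) x ∈ V := by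
  unfold plusPart
  rw [Set.mem_iInter]
  refine forall_congr' fun k => ?_
  rw [mem_autImage, npow_inv_eq]

lemma mem_minusPart_iff {β : MulAut G} {V : Set G} {x : G} :
    x ∈ minusPart β V ↔ ∀ k : ℕ, (β ^ (k : ℤ)) x ∈ V := by
  unfold minusPart
  rw [Set.mem_iInter]
  refine forall_congr' fun k => ?_
  rw [mem_autImage, inv_npow_eq]
  have : (β ^ (-(k:ℤ)))⁻¹ = β ^ (k:ℤ) := by
    rw [← zpow_neg, neg_neg]
  rw [this]

lemma mem_plusPart_iff' {β : MulAut G} {V : Set G} {x : G} :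
    x ∈ plusPart β V ↔ ∀ z : ℤ, z ≤ 0 → (β ^ z) x ∈ V := by
  rw [mem_plusPart_iff]
  constructor
  · intro h z hz
    obtain ⟨n, rfl⟩ : ∃ n : ℕ, z = -(n : ℤ) := ⟨(-z).toNat, by omega⟩
    exact h n
  · intro h k
    exact h _ (by omega)

lemma mem_minusPart_iff' {β : MulAut G} {V : Set G} {x : G} :
    x ∈ minusPart β V ↔ ∀ z : ℤ, 0 ≤ z → (β ^ z) x ∈ V := by
  rw [mem_minusPart_iff]
  constructor
  · intro h z hz
    obtain ⟨n, rfl⟩ : ∃ n : ℕ, z = (n : ℤ) := ⟨z.toNat, by omega⟩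
    exact h n
  · intro h k
    exact h _ (by omega)

lemma plusPart_inv (β : MulAut G) (V : Set G) : plusPart β⁻¹ V = minusPart β V := rfl

lemma minusPart_inv (β : MulAut G) (V : Set G) : minusPart β⁻¹ V = plusPart β V := by
  unfold minusPart plusPart
  simp [inv_inv]

lemma coe_mapAut (β : MulAut G) (T : Subgroup G) : ((mapAut β T : Subgroup G) : Set G) = ⇑β '' T := rfl

lemma coe_plusSub (β : MulAut G) (T : Subgroup G) :
    ((plusSub β T : Subgroup G) : Set G) = plusPart β (T : Set G) := by
  unfold plusSub plusPart
  rw [Subgroup.coe_iInf]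
  rfl

lemma coe_minusSub (β : MulAut G) (T : Subgroup G) :
    ((minusSub β T : Subgroup G) : Set G) = minusPart β (T : Set G) := by
  unfold minusSub minusPart
  rw [Subgroup.coe_iInf]
  rfl

lemma coe_mul_self (T : Subgroup G) : (T : Set G) * (T : Set G) = (T : Set G) := by
  apply Set.Subset.antisymm
  · rintro x ⟨a, ha, b, hb, rfl⟩
    exact T.mul_mem ha hb
  · intro x hx
    exact ⟨x, hx, 1, T.one_mem, mul_one x⟩

lemma plusPart_subset {β : MulAut G} {T : Subgroup G} : plusPart β (T : Set G) ⊆ T := by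
  intro x hx
  have h0 := mem_plusPart_iff.1 hx 0
  simpa using h0

lemma minusPart_subset {β : MulAut G} {T : Subgroup G} : minusPart β (T : Set G) ⊆ T := by
  intro x hx
  have h0 := mem_minusPart_iff.1 hx 0
  simpa using h0

end Helpers

set_option linter.unusedSectionVars false

section TopHelpers

variable [Group G] [TopologicalSpace G] [IsTopologicalGroup G]

lemma continuous_aut_pow {β : MulAut G} (h : Continuous ⇑β) : ∀ n : ℕ, Continuous ⇑(β ^ n) := by
  intro n
  induction n with
  | zero =>
    have : ⇑(β ^ 0) = id := by funext x; simp
    rw [this]; exact continuous_id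
  | succ n ih =>
    have : ⇑(β ^ (n + 1)) = ⇑(β ^ n) ∘ ⇑β := by
      funext x; simp [pow_succ, MulAut.mul_apply]
    rw [this]; exact ih.comp h

lemma continuous_aut_zpow {β : MulAut G} (h : Continuous ⇑β) (h' : Continuous ⇑β⁻¹) :
    ∀ z : ℤ, Continuous ⇑(β ^ z) := by
  intro z
  cases z with
  | ofNat n =>
    have : β ^ (Int.ofNat n) = β ^ n := zpow_natCast β n
    rw [this]; exact continuous_aut_pow h n
  | negSucc n =>
    have : β ^ (Int.negSucc n) = β⁻¹ ^ (n + 1) := by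
      rw [zpow_negSucc, inv_pow]
    rw [this]; exact continuous_aut_pow h' (n + 1)

variable {β : MulAut G} (hc : ∀ z : ℤ, Continuous ⇑(β ^ z))

include hc in
lemma isCompact_autImage (z : ℤ) {V : Set G} (hV : IsCompact V) : IsCompact (⇑(β ^ z) '' V) :=
  hV.image (hc z)

include hc in
lemma isClosed_autImage (z : ℤ) {V : Set G} (hV : IsClosed V) : IsClosed (⇑(β ^ z) '' V) := by
  rw [autImage_eq_preimage]
  have : ((β ^ z)⁻¹ : MulAut G) = β ^ (-z) := by rw [← zpow_neg]
  rw [this]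
  exact hV.preimage (hc (-z))

include hc in
lemma isOpen_autImage (z : ℤ) {V : Set G} (hV : IsOpen V) : IsOpen (⇑(β ^ z) '' V) := by
  rw [autImage_eq_preimage]
  have : ((β ^ z)⁻¹ : MulAut G) = β ^ (-z) := by rw [← zpow_neg]
  rw [this]
  exact hV.preimage (hc (-z))

include hc in
lemma isCompact_plusPart [T2Space G] {T : Subgroup G} (hTc : IsCompact (T : Set G)) :
    IsCompact (plusPart β (T : Set G)) := by
  have hclosed : IsClosed (plusPart β (T : Set G)) := by
    unfold plusPart
    refine isClosed_iInter fun k => ?_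
    have : (β ^ k : MulAut G) = β ^ (k : ℤ) := (zpow_natCast β k).symm
    rw [this]
    exact isClosed_autImage hc _ hTc.isClosed
  exact hTc.of_isClosed_subset hclosed plusPart_subset

include hc in
lemma isCompact_minusPart [T2Space G] {T : Subgroup G} (hTc : IsCompact (T : Set G)) :
    IsCompact (minusPart β (T : Set G)) := by
  have hclosed : IsClosed (minusPart β (T : Set G)) := by
    unfold minusPart
    refine isClosed_iInter fun k => ?_
    have : (β⁻¹ ^ k : MulAut G) = β ^ (-(k : ℤ)) := inv_npow_eq β k
    rw [this]
    exact isClosed_autImage hc _ hTc.isClosed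
  exact hTc.of_isClosed_subset hclosed minusPart_subset

lemma mem_mul_iInter [T2Space G] {ι : Type*} [Nonempty ι] {K : Set G} (hK : IsCompact K)
    {C : ι → Set G} (hCc : ∀ i, IsCompact (C i))
    (hdir : ∀ i j, ∃ k, C k ⊆ C i ∧ C k ⊆ C j) {x : G} (hx : ∀ i, x ∈ K * C i) :
    x ∈ K * ⋂ i, C i := by
  set F : ι → Set (G × G) := fun i => (K ×ˢ C i) ∩ {p : G × G | p.1 * p.2 = x} with hF
  have hclosed : IsClosed {p : G × G | p.1 * p.2 = x} :=
    isClosed_eq (continuous_fst.mul continuous_snd) continuous_const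
  have hFc : ∀ i, IsCompact (F i) := fun i => (hK.prod (hCc i)).inter_right hclosed
  have hFne : ∀ i, (F i).Nonempty := by
    intro i
    rcases hx i with ⟨a, ha, b, hb, hab⟩
    exact ⟨(a, b), ⟨ha, hb⟩, hab⟩
  have hFdir : Directed (· ⊇ ·) F := by
    intro i j
    rcases hdir i j with ⟨k, h1, h2⟩
    refine ⟨k, ?_, ?_⟩
    · rintro p ⟨⟨hp1, hp2⟩, hp3⟩
      exact ⟨⟨hp1, h1 hp2⟩, hp3⟩
    · rintro p ⟨⟨hp1, hp2⟩, hp3⟩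
      exact ⟨⟨hp1, h2 hp2⟩, hp3⟩
  obtain ⟨p, hp⟩ := IsCompact.nonempty_iInter_of_directed_nonempty_isCompact_isClosed
    F hFdir hFne hFc (fun i => (hFc i).isClosed)
  have hp' : ∀ i, p ∈ F i := Set.mem_iInter.1 hp
  rcases hp' (Classical.arbitrary ι) with ⟨⟨hp1, _⟩, hp3⟩
  exact ⟨p.1, hp1, p.2, Set.mem_iInter.2 fun i => (hp' i).1.2, hp3⟩

end TopHelpers


section PartI

variable [Group G] [TopologicalSpace G] [IsTopologicalGroup G] [T2Space G]

/-- Tube lemma for a continuous two-variable map over a compact set. -/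
lemma tube_lemma {C : Set G} (hC : IsCompact C) {O : Set G} (hO : IsOpen O)
    (F : G × G → G) (hF : Continuous F) (hF1 : ∀ c ∈ C, F (c, 1) ∈ O) :
    ∃ B : Set G, IsOpen B ∧ (1 : G) ∈ B ∧ ∀ c ∈ C, ∀ b ∈ B, F (c, b) ∈ O := by
  have key : ∀ c ∈ C, ∃ AB : Set G × Set G, IsOpen AB.1 ∧ c ∈ AB.1 ∧ IsOpen AB.2 ∧
      (1 : G) ∈ AB.2 ∧ ∀ a ∈ AB.1, ∀ b ∈ AB.2, F (a, b) ∈ O := by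
    intro c hc
    have h2 : F ⁻¹' O ∈ 𝓝 (c, (1 : G)) :=
      hF.continuousAt.preimage_mem_nhds (hO.mem_nhds (hF1 c hc))
    rw [mem_nhds_prod_iff'] at h2
    obtain ⟨A, B, hA, hcA, hB, h1B, hAB⟩ := h2
    exact ⟨(A, B), hA, hcA, hB, h1B, fun a ha b hb => hAB (Set.mk_mem_prod ha hb)⟩
  choose! AB hA hcA hB h1B hgood using key
  obtain ⟨t, htC, hcover⟩ := hC.elim_nhds_subcover (fun c => (AB c).1)
    (fun c hc => (hA c hc).mem_nhds (hcA c hc))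
  refine ⟨⋂ c ∈ t, (AB c).2, ?_, ?_, ?_⟩
  · exact isOpen_biInter_finset fun c hc => hB c (htC c hc)
  · exact Set.mem_iInter₂.2 fun c hc => h1B c (htC c hc)
  · intro c hc b hb
    obtain ⟨c₀, hc₀t, hcc₀⟩ := Set.mem_iUnion₂.1 (hcover hc)
    exact hgood c₀ (htC c₀ hc₀t) c hcc₀ b (Set.mem_iInter₂.1 hb c₀ hc₀t)

/-- For a compact set inside an open set, an open symmetric identity neighbourhood
moving the compact set inside the open set. -/
lemma exists_symm_nhd_mul_subset {C U : Set G} (hC : IsCompact C) (hU : IsOpen U) (hCU : C ⊆ U) :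
    ∃ B : Set G, IsOpen B ∧ (1 : G) ∈ B ∧ B⁻¹ = B ∧ C * B ⊆ U := by
  obtain ⟨B, hBo, h1B, hB⟩ := tube_lemma hC hU (fun p => p.1 * p.2)
    (continuous_fst.mul continuous_snd) (fun c hc => by simpa using hCU hc)
  refine ⟨B ∩ B⁻¹, hBo.inter hBo.inv, ⟨h1B, by simpa using h1B⟩, by ext x; simp [and_comm], ?_⟩
  rintro x ⟨a, ha, b, hb, rfl⟩
  exact hB a ha b hb.1

variable [TotallyDisconnectedSpace G] [LocallyCompactSpace G]

/-- A compact clopen neighbourhood of `1` inside any open neighbourhood. -/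
lemma exists_isCompact_isClopen_nhd {Ω : Set G} (hΩ : IsOpen Ω) (h1 : (1 : G) ∈ Ω) :
    ∃ C : Set G, IsCompact C ∧ IsClopen C ∧ (1 : G) ∈ C ∧ C ⊆ Ω := by
  obtain ⟨K, hKc, hK1, hKΩ⟩ := exists_compact_subset hΩ h1
  have hbasis := loc_compact_Haus_tot_disc_of_zero_dim (H := G)
  obtain ⟨C, hCclopen, h1C, hCsub⟩ :=
    hbasis.mem_nhds_iff.1 (isOpen_interior.mem_nhds hK1)
  refine ⟨C, hKc.of_isClosed_subset hCclopen.1 (hCsub.trans interior_subset), hCclopen, h1C,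
    (hCsub.trans interior_subset).trans hKΩ⟩

/-- van Dantzig: a compact open subgroup inside any open neighbourhood of `1`. -/
lemma exists_compactOpen_subgroup_subset {Ω : Set G} (hΩ : IsOpen Ω) (h1 : (1 : G) ∈ Ω) :
    ∃ H : Subgroup G, IsCompact (H : Set G) ∧ IsOpen (H : Set G) ∧ (H : Set G) ⊆ Ω := by
  obtain ⟨C, hCc, hCclopen, h1C, hCΩ⟩ := exists_isCompact_isClopen_nhd hΩ h1
  obtain ⟨B, hBo, h1B, hBsymm, hCB⟩ := exists_symm_nhd_mul_subset hCc hCclopen.2 subset_rfl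
  have hBC : B ⊆ C := fun b hb => hCB ⟨1, h1C, b, hb, one_mul b⟩
  have hpow_subset : ∀ n : ℕ, B ^ (n + 1) ⊆ C := by
    intro n
    induction n with
    | zero => simpa [pow_one] using hBC
    | succ n ih =>
      calc B ^ (n + 2) = B ^ (n + 1) * B := by rw [pow_succ]
      _ ⊆ C * B := Set.mul_subset_mul_right ih
      _ ⊆ C := hCB
  have hpow_inv : ∀ n : ℕ, (B ^ (n + 1))⁻¹ = B ^ (n + 1) := by
    intro n
    induction n with
    | zero => simpa [pow_one] using hBsymm
    | succ n ih =>
      rw [pow_succ, mul_inv_rev, hBsymm, ih, ← pow_succ']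
      exact pow_succ B (n + 1)
  have hpow_open : ∀ n : ℕ, IsOpen (B ^ (n + 1)) := by
    intro n
    induction n with
    | zero => simpa [pow_one] using hBo
    | succ n _ => rw [pow_succ]; exact hBo.mul_left
  refine ⟨{ carrier := ⋃ n : ℕ, B ^ (n + 1)
            one_mem' := Set.mem_iUnion.2 ⟨0, by simpa [pow_one] using h1B⟩
            mul_mem' := by
              rintro a b ha hb
              obtain ⟨m, hm⟩ := Set.mem_iUnion.1 ha
              obtain ⟨n, hn⟩ := Set.mem_iUnion.1 hb
              refine Set.mem_iUnion.2 ⟨m + n + 1, ?_⟩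
              have : B ^ (m + n + 2) = B ^ (m + 1) * B ^ (n + 1) := by
                rw [← pow_add]; ring_nf
              rw [this]
              exact Set.mul_mem_mul hm hn
            inv_mem' := by
              rintro a ha
              obtain ⟨m, hm⟩ := Set.mem_iUnion.1 ha
              refine Set.mem_iUnion.2 ⟨m, ?_⟩
              rw [← hpow_inv m]
              exact Set.inv_mem_inv.2 hm }, ?_, ?_, ?_⟩
  · show IsCompact (⋃ n : ℕ, B ^ (n + 1))
    have hopen : IsOpen (⋃ n : ℕ, B ^ (n + 1)) := isOpen_iUnion hpow_open
    have hsub : (⋃ n : ℕ, B ^ (n + 1)) ⊆ C := Set.iUnion_subset hpow_subset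
    have hclosed : IsClosed (⋃ n : ℕ, B ^ (n + 1)) := by
      have := Subgroup.isClosed_of_isOpen (G := G)
        { carrier := ⋃ n : ℕ, B ^ (n + 1)
          one_mem' := Set.mem_iUnion.2 ⟨0, by simpa [pow_one] using h1B⟩
          mul_mem' := by
            rintro a b ha hb
            obtain ⟨m, hm⟩ := Set.mem_iUnion.1 ha
            obtain ⟨n, hn⟩ := Set.mem_iUnion.1 hb
            refine Set.mem_iUnion.2 ⟨m + n + 1, ?_⟩
            have : B ^ (m + n + 2) = B ^ (m + 1) * B ^ (n + 1) := by
              rw [← pow_add]; ring_nf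
            rw [this]
            exact Set.mul_mem_mul hm hn
          inv_mem' := by
            rintro a ha
            obtain ⟨m, hm⟩ := Set.mem_iUnion.1 ha
            refine Set.mem_iUnion.2 ⟨m, ?_⟩
            rw [← hpow_inv m]
            exact Set.inv_mem_inv.2 hm } hopen
      exact this
    exact hCc.of_isClosed_subset hclosed hsub
  · exact isOpen_iUnion hpow_open
  · exact (Set.iUnion_subset hpow_subset).trans hCΩ

end PartI


section PartIb

variable [Group G] [TopologicalSpace G] [IsTopologicalGroup G] [T2Space G]
  [TotallyDisconnectedSpace G] [LocallyCompactSpace G]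

/-- A compact open subgroup squeezed between a compact subgroup and an open set. -/
lemma exists_compactOpen_between {U : Set G} (hU : IsOpen U) (N : Subgroup G)
    (hNc : IsCompact (N : Set G)) (hNU : (N : Set G) ⊆ U) :
    ∃ W : Subgroup G, IsCompact (W : Set G) ∧ IsOpen (W : Set G) ∧
      (N : Set G) ⊆ (W : Set G) ∧ (W : Set G) ⊆ U := by
  obtain ⟨B, hBo, h1B, _, hNB⟩ := exists_symm_nhd_mul_subset hNc hU hNU
  obtain ⟨O, hOc, hOo, hOB⟩ := exists_compactOpen_subgroup_subset hBo h1B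
  let P : Subgroup G :=
    { carrier := {g | ∀ n ∈ (N : Set G), n⁻¹ * g * n ∈ O}
      one_mem' := fun n _ => by simpa using O.one_mem
      mul_mem' := by
        intro a b ha hb n hn
        have h := O.mul_mem (ha n hn) (hb n hn)
        have e : (n⁻¹ * a * n) * (n⁻¹ * b * n) = n⁻¹ * (a * b) * n := by group
        rwa [e] at h
      inv_mem' := by
        intro a ha n hn
        have h := O.inv_mem (ha n hn)
        have e : (n⁻¹ * a * n)⁻¹ = n⁻¹ * a⁻¹ * n := by group
        rwa [e] at h }
  have hPmem : ∀ x : G, x ∈ P ↔ ∀ n ∈ (N : Set G), n⁻¹ * x * n ∈ O := fun x => Iff.rfl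
  have hPO : (P : Set G) ⊆ (O : Set G) := by
    intro g hg
    have := (hPmem g).1 hg 1 N.one_mem
    simpa using this
  have hPclosed : IsClosed (P : Set G) := by
    have he : (P : Set G) = ⋂ n ∈ (N : Set G), (fun g => n⁻¹ * g * n) ⁻¹' (O : Set G) := by
      ext x
      simp only [Set.mem_iInter, Set.mem_preimage]
      exact hPmem x
    rw [he]
    exact isClosed_biInter fun n _ =>
      hOc.isClosed.preimage ((continuous_const.mul continuous_id).mul continuous_const)
  have hPc : IsCompact (P : Set G) := hOc.of_isClosed_subset hPclosed hPO
  have hPo : IsOpen (P : Set G) := by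
    obtain ⟨B', hB'o, h1B', hB'⟩ := tube_lemma hNc hOo (fun p => p.1⁻¹ * p.2 * p.1)
      ((continuous_fst.inv.mul continuous_snd).mul continuous_fst)
      (fun c hc => by simpa using O.one_mem)
    refine Subgroup.isOpen_of_mem_nhds P (Filter.mem_of_superset (hB'o.mem_nhds h1B') ?_)
    intro b hb
    exact (hPmem b).2 fun n hn => hB' n hn b hb
  have hconj : ∀ m ∈ (N : Set G), ∀ p ∈ P, m⁻¹ * p * m ∈ P := by
    intro m hm p hp
    refine (hPmem _).2 fun n hn => ?_
    have e : n⁻¹ * (m⁻¹ * p * m) * n = (m * n)⁻¹ * p * (m * n) := by group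
    rw [e]
    exact (hPmem p).1 hp (m * n) (N.mul_mem hm hn)
  refine ⟨{ carrier := (N : Set G) * (P : Set G)
            one_mem' := ⟨1, N.one_mem, 1, P.one_mem, one_mul 1⟩
            mul_mem' := ?_
            inv_mem' := ?_ }, ?_, ?_, ?_, ?_⟩
  · rintro a b ⟨n₁, hn₁, p₁, hp₁, rfl⟩ ⟨n₂, hn₂, p₂, hp₂, rfl⟩
    refine ⟨n₁ * n₂, N.mul_mem hn₁ hn₂, (n₂⁻¹ * p₁ * n₂) * p₂,
      P.mul_mem (hconj n₂ hn₂ p₁ hp₁) hp₂, by group⟩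
  · rintro a ⟨n, hn, p, hp, rfl⟩
    refine ⟨n⁻¹, N.inv_mem hn, n * p⁻¹ * n⁻¹, ?_, by group⟩
    have := hconj n⁻¹ (N.inv_mem hn) p⁻¹ (P.inv_mem hp)
    simpa using this
  · exact hNc.mul hPc
  · refine Subgroup.isOpen_of_mem_nhds _ (Filter.mem_of_superset (hPo.mem_nhds P.one_mem) ?_)
    intro p hp
    exact ⟨1, N.one_mem, p, hp, one_mul p⟩
  · intro n hn
    exact ⟨n, hn, 1, P.one_mem, mul_one n⟩
  · rintro x ⟨n, hn, p, hp, rfl⟩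
    exact hNB ⟨n, hn, p, hOB (hPO hp), rfl⟩

end PartIb


section TidyingAbove

variable [Group G]

/-- `⋂_{k=0}^m β^k(W)` as a subgroup. -/
def Vm (β : MulAut G) (W : Subgroup G) (m : ℕ) : Subgroup G :=
  ⨅ k : {k : ℕ // k ≤ m}, mapAut (β ^ (k : ℕ)) W

lemma mem_Vm {β : MulAut G} {W : Subgroup G} {m : ℕ} {x : G} :
    x ∈ Vm β W m ↔ ∀ k : ℕ, k ≤ m → (β ^ (-(k : ℤ))) x ∈ W := by
  unfold Vm
  rw [Subgroup.mem_iInf]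
  constructor
  · intro h k hk
    have h2 := h ⟨k, hk⟩
    rw [← SetLike.mem_coe, coe_mapAut, mem_autImage, npow_inv_eq] at h2
    exact h2
  · rintro h ⟨k, hk⟩
    rw [← SetLike.mem_coe, coe_mapAut, mem_autImage, npow_inv_eq]
    exact h k hk

lemma mem_Vm_set {β : MulAut G} {W : Subgroup G} {m : ℕ} {x : G} :
    x ∈ ((Vm β W m : Subgroup G) : Set G) ↔ ∀ k : ℕ, k ≤ m → (β ^ (-(k : ℤ))) x ∈ W := by
  rw [SetLike.mem_coe, mem_Vm]

lemma Vm_subset {β : MulAut G} {W : Subgroup G} {m : ℕ} :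
    ((Vm β W m : Subgroup G) : Set G) ⊆ W := by
  intro x hx
  have := mem_Vm_set.1 hx 0 (Nat.zero_le m)
  simpa using this

lemma Vm_mono {β : MulAut G} {W : Subgroup G} {m m' : ℕ} (h : m ≤ m') :
    ((Vm β W m' : Subgroup G) : Set G) ⊆ ((Vm β W m : Subgroup G) : Set G) := by
  intro x hx
  exact mem_Vm_set.2 fun k hk => mem_Vm_set.1 hx k (hk.trans h)

lemma mem_plusPart_Vm {β : MulAut G} {W : Subgroup G} {m : ℕ} {x : G} :
    x ∈ plusPart β ((Vm β W m : Subgroup G) : Set G) ↔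
      ∀ z : ℤ, z ≤ 0 → (β ^ z) x ∈ W := by
  rw [mem_plusPart_iff']
  constructor
  · intro h z hz
    have h2 := mem_Vm_set.1 (h z hz) 0 (Nat.zero_le m)
    simpa using h2
  · intro h z hz
    refine mem_Vm_set.2 fun k _ => ?_
    rw [zpow_apply_zpow_apply]
    exact h _ (by omega)

lemma mem_minusPart_Vm {β : MulAut G} {W : Subgroup G} {m : ℕ} {x : G} :
    x ∈ minusPart β ((Vm β W m : Subgroup G) : Set G) ↔
      ∀ z : ℤ, -(m : ℤ) ≤ z → (β ^ z) x ∈ W := by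
  rw [mem_minusPart_iff']
  constructor
  · intro h z hz
    rcases le_or_gt 0 z with h0 | h0
    · have h2 := mem_Vm_set.1 (h z h0) 0 (Nat.zero_le m)
      simpa using h2
    · have h2 := mem_Vm_set.1 (h 0 le_rfl) (-z).toNat (by omega)
      rw [zpow_apply_zpow_apply] at h2
      have e : (-((-z).toNat : ℤ)) + 0 = z := by omega
      rwa [e] at h2
  · intro h z hz
    refine mem_Vm_set.2 fun k hk => ?_
    rw [zpow_apply_zpow_apply]
    exact h _ (by omega)

lemma minusPart_Vm_antitone {β : MulAut G} {W : Subgroup G} {m m' : ℕ} (h : m ≤ m') :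
    minusPart β ((Vm β W m' : Subgroup G) : Set G) ⊆
      minusPart β ((Vm β W m : Subgroup G) : Set G) := by
  intro x hx
  refine mem_minusPart_Vm.2 fun z hz => mem_minusPart_Vm.1 hx z (by omega)

variable [TopologicalSpace G] [IsTopologicalGroup G] [T2Space G]

variable {β : MulAut G} (hc : ∀ z : ℤ, Continuous ⇑(β ^ z)) {W : Subgroup G}
  (hWc : IsCompact (W : Set G)) (hWo : IsOpen (W : Set G))

include hc hWc in
lemma Vm_isCompact (m : ℕ) : IsCompact ((Vm β W m : Subgroup G) : Set G) := by
  have hclosed : IsClosed ((Vm β W m : Subgroup G) : Set G) := by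
    have he : ((Vm β W m : Subgroup G) : Set G) =
        ⋂ k : {k : ℕ // k ≤ m}, ⇑(β ^ ((k : ℕ) : ℤ)) '' (W : Set G) := by
      unfold Vm
      rw [Subgroup.coe_iInf]
      refine Set.iInter_congr fun k => ?_
      rw [coe_mapAut, zpow_natCast]
    rw [he]
    exact isClosed_iInter fun k => isClosed_autImage hc _ hWc.isClosed
  exact hWc.of_isClosed_subset hclosed Vm_subset

include hc hWc hWo in
lemma Vm_isOpen (m : ℕ) : IsOpen ((Vm β W m : Subgroup G) : Set G) := by
  have he : ((Vm β W m : Subgroup G) : Set G) =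
      ⋂ k : {k : ℕ // k ≤ m}, ⇑(β ^ ((k : ℕ) : ℤ)) '' (W : Set G) := by
    unfold Vm
    rw [Subgroup.coe_iInf]
    refine Set.iInter_congr fun k => ?_
    rw [coe_mapAut, zpow_natCast]
  rw [he]
  have : Finite {k : ℕ // k ≤ m} := by
    have : {k : ℕ // k ≤ m} ≃ Fin (m + 1) := ⟨fun k => ⟨k.1, by omega⟩, fun i => ⟨i.1, by omega⟩,
      fun k => rfl, fun i => rfl⟩
    exact Finite.of_equiv _ this.symm
  exact isOpen_iInter_of_finite fun k => isOpen_autImage hc _ hWo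

/-- number of left `W`-cosets met by `β(Vₘ)` -/
noncomputable def tcount (β : MulAut G) (W : Subgroup G) (m : ℕ) : ℕ :=
  (QuotientGroup.mk (s := W) '' (⇑β '' ((Vm β W m : Subgroup G) : Set G))).ncard

include hWo in
lemma finite_mk_image {C : Set G} (hC : IsCompact C) :
    (QuotientGroup.mk (s := W) '' C).Finite := by
  obtain ⟨t, htC, hcover⟩ := hC.elim_nhds_subcover (fun c => (fun x => c⁻¹ * x) ⁻¹' (W : Set G))
    (fun c hc => by
      refine IsOpen.mem_nhds (hWo.preimage (continuous_const.mul continuous_id)) ?_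
      simpa using W.one_mem)
  refine Set.Finite.subset (t.finite_toSet.image QuotientGroup.mk) ?_
  rintro q ⟨c, hcC, rfl⟩
  obtain ⟨c₀, hc₀⟩ := Set.mem_iUnion₂.1 (hcover hcC)
  obtain ⟨hc₀t, hmem⟩ := hc₀
  refine ⟨c₀, hc₀t, ?_⟩
  exact (QuotientGroup.eq.2 hmem).symm ▸ rfl

include hc in
lemma continuous_of_hc : Continuous ⇑β := by
  have h1 := hc 1
  rwa [zpow_one] at h1

include hc hWc hWo in
lemma tcount_antitone : ∀ m, tcount β W (m + 1) ≤ tcount β W m := by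
  intro m
  exact Set.ncard_le_ncard (Set.image_mono (Set.image_mono (Vm_mono (Nat.le_succ m))))
    (finite_mk_image hWo ((Vm_isCompact hc hWc m).image (continuous_of_hc hc)))

end TidyingAbove


section TidyingAbove2

variable [Group G] [TopologicalSpace G] [IsTopologicalGroup G] [T2Space G]
variable {β : MulAut G} (hc : ∀ z : ℤ, Continuous ⇑(β ^ z)) {W : Subgroup G}
  (hWc : IsCompact (W : Set G)) (hWo : IsOpen (W : Set G))

include hc hWc hWo in
lemma covering_of_tcount_eq {m : ℕ} (heq : tcount β W (m + 1) = tcount β W m) :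
    ((Vm β W m : Subgroup G) : Set G) ⊆
      ((Vm β W (m + 1) : Subgroup G) : Set G) *
        {x : G | x ∈ ((Vm β W m : Subgroup G) : Set G) ∧ (β ^ (1 : ℤ)) x ∈ W} := by
  intro x hx
  have hsub : QuotientGroup.mk (s := W) '' (⇑β '' ((Vm β W (m + 1) : Subgroup G) : Set G)) ⊆
      QuotientGroup.mk (s := W) '' (⇑β '' ((Vm β W m : Subgroup G) : Set G)) :=
    Set.image_mono (Set.image_mono (Vm_mono (Nat.le_succ m)))
  have hfin : (QuotientGroup.mk (s := W) '' (⇑β '' ((Vm β W m : Subgroup G) : Set G))).Finite :=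
    finite_mk_image hWo ((Vm_isCompact hc hWc m).image (continuous_of_hc hc))
  have hEq : QuotientGroup.mk (s := W) '' (⇑β '' ((Vm β W (m + 1) : Subgroup G) : Set G)) =
      QuotientGroup.mk (s := W) '' (⇑β '' ((Vm β W m : Subgroup G) : Set G)) :=
    Set.eq_of_subset_of_ncard_le hsub (le_of_eq heq.symm) hfin
  have hmk : (QuotientGroup.mk (s := W) (β x)) ∈
      QuotientGroup.mk (s := W) '' (⇑β '' ((Vm β W (m + 1) : Subgroup G) : Set G)) := by
    rw [hEq]
    exact ⟨β x, ⟨x, hx, rfl⟩, rfl⟩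
  obtain ⟨q, ⟨y, hy, rfl⟩, hq⟩ := hmk
  have hW : (β y)⁻¹ * β x ∈ W := QuotientGroup.eq.1 hq
  have hbd : β (y⁻¹ * x) ∈ W := by
    rw [map_mul, map_inv]
    exact hW
  have hmemVm : y⁻¹ * x ∈ ((Vm β W m : Subgroup G) : Set G) := by
    refine SetLike.mem_coe.2 (Subgroup.mul_mem _ (Subgroup.inv_mem _ ?_) (SetLike.mem_coe.1 hx))
    exact SetLike.mem_coe.1 (Vm_mono (Nat.le_succ m) hy)
  refine ⟨y, hy, y⁻¹ * x, ⟨hmemVm, ?_⟩, by group⟩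
  rwa [zpow_one]

include hc hWc hWo in
lemma strip_lemma (n₀ : ℕ) (hstab : ∀ m, n₀ ≤ m → tcount β W (m + 1) = tcount β W m) :
    ∀ j : ℕ, ∀ m : ℕ, n₀ ≤ m → ((Vm β W m : Subgroup G) : Set G) ⊆
      ((Vm β W (m + 1) : Subgroup G) : Set G) *
        {x : G | x ∈ ((Vm β W m : Subgroup G) : Set G) ∧
          ∀ i : ℕ, 1 ≤ i → i ≤ j → (β ^ (i : ℤ)) x ∈ W} := by
  intro j
  induction j with
  | zero =>
    intro m _ x hx
    exact ⟨1, Subgroup.one_mem _, x, ⟨hx, fun i h1 h2 => by omega⟩, one_mul x⟩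
  | succ j ih =>
    intro m hm x hx
    obtain ⟨y, hy, d, ⟨hd1, hd2⟩, hyd₀⟩ := ih m hm hx
    have hyd : y * d = x := hyd₀
    have hβjd : (β ^ (j : ℤ)) d ∈ ((Vm β W (m + j) : Subgroup G) : Set G) := by
      refine mem_Vm_set.2 fun k hk => ?_
      rw [zpow_apply_zpow_apply]
      rcases le_or_gt (j : ℤ) (k : ℤ) with h | h
      · have h2 := mem_Vm_set.1 hd1 (k - j) (by omega)
        have e : (-((k - j : ℕ) : ℤ)) = -(k : ℤ) + j := by omega
        rwa [e] at h2
      · have h2 := hd2 (j - k) (by omega) (by omega)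
        have e : (((j - k : ℕ) : ℤ)) = -(k : ℤ) + j := by omega
        rwa [e] at h2
    have hcov := covering_of_tcount_eq hc hWc hWo (hstab (m + j) (by omega)) hβjd
    obtain ⟨e, he, f, ⟨hf1, hf2⟩, hef₀⟩ := hcov
    have hef : e * f = (β ^ (j : ℤ)) d := hef₀
    have hd_eq : (β ^ (-(j : ℤ))) e * (β ^ (-(j : ℤ))) f = d := by
      rw [← map_mul, hef, zpow_apply_zpow_apply]
      simp
    refine ⟨y * (β ^ (-(j : ℤ))) e, ?_, (β ^ (-(j : ℤ))) f, ⟨?_, ?_⟩, ?_⟩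
    · refine SetLike.mem_coe.2 (Subgroup.mul_mem _ (SetLike.mem_coe.1 hy) ?_)
      refine mem_Vm.2 fun k hk => ?_
      rw [zpow_apply_zpow_apply]
      have h2 := mem_Vm_set.1 he (k + j) (by omega)
      have e2 : (-((k + j : ℕ) : ℤ)) = -(k : ℤ) + -(j : ℤ) := by omega
      rwa [e2] at h2
    · refine mem_Vm_set.2 fun k hk => ?_
      rw [zpow_apply_zpow_apply]
      have h2 := mem_Vm_set.1 hf1 (k + j) (by omega)
      have e2 : (-((k + j : ℕ) : ℤ)) = -(k : ℤ) + -(j : ℤ) := by omega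
      rwa [e2] at h2
    · intro i h1 h2
      rw [zpow_apply_zpow_apply]
      rcases Nat.lt_or_ge i (j + 1) with h | h
      · have h3 := mem_Vm_set.1 hf1 (j - i) (by omega)
        have e2 : (-((j - i : ℕ) : ℤ)) = (i : ℤ) + -(j : ℤ) := by omega
        rwa [e2] at h3
      · have e2 : ((i : ℤ) + -(j : ℤ)) = 1 := by omega
        rw [e2, zpow_one]
        rw [zpow_one] at hf2
        exact hf2
    · show y * (β ^ (-(j : ℤ))) e * ((β ^ (-(j : ℤ))) f) = x
      rw [mul_assoc, hd_eq, hyd]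

include hc hWc hWo in
lemma Vm_sub_mul_minus (n₀ : ℕ) (hstab : ∀ m, n₀ ≤ m → tcount β W (m + 1) = tcount β W m)
    (m : ℕ) (hm : n₀ ≤ m) :
    ((Vm β W m : Subgroup G) : Set G) ⊆
      ((Vm β W (m + 1) : Subgroup G) : Set G) *
        minusPart β ((Vm β W m : Subgroup G) : Set G) := by
  intro x hx
  set D : ℕ → Set G := fun j => {x : G | x ∈ ((Vm β W m : Subgroup G) : Set G) ∧
    ∀ i : ℕ, 1 ≤ i → i ≤ j → (β ^ (i : ℤ)) x ∈ W} with hD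
  have hDclosed : ∀ j, IsClosed (D j) := by
    intro j
    have he : D j = ((Vm β W m : Subgroup G) : Set G) ∩
        ⋂ i : {i : ℕ // 1 ≤ i ∧ i ≤ j}, (fun x => (β ^ ((i : ℕ) : ℤ)) x) ⁻¹' (W : Set G) := by
      ext z
      simp only [hD, Set.mem_setOf_eq, Set.mem_inter_iff, Set.mem_iInter, Set.mem_preimage,
        Subtype.forall]
      constructor
      · rintro ⟨h1, h2⟩
        exact ⟨h1, fun i hi => h2 i hi.1 hi.2⟩
      · rintro ⟨h1, h2⟩
        exact ⟨h1, fun i hi1 hi2 => h2 i ⟨hi1, hi2⟩⟩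
    rw [he]
    have hVmclosed : IsClosed ((Vm β W m : Subgroup G) : Set G) := (Vm_isCompact hc hWc m).isClosed
    exact hVmclosed.inter (isClosed_iInter fun i => hWc.isClosed.preimage (hc _))
  have hDcompact : ∀ j, IsCompact (D j) :=
    fun j => (Vm_isCompact hc hWc m).of_isClosed_subset (hDclosed j) (fun z hz => hz.1)
  have hj : ∀ j : ℕ, x ∈ ((Vm β W (m + 1) : Subgroup G) : Set G) * D j :=
    fun j => strip_lemma hc hWc hWo n₀ hstab j m hm hx
  have hmem := mem_mul_iInter (Vm_isCompact hc hWc (m + 1)) hDcompact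
    (fun i j => ⟨max i j, fun z hz => ⟨hz.1, fun i' h1 h2 => hz.2 i' h1 (h2.trans (le_max_left i j))⟩,
      fun z hz => ⟨hz.1, fun i' h1 h2 => hz.2 i' h1 (h2.trans (le_max_right i j))⟩⟩) hj
  have hiInter : (⋂ j, D j) = minusPart β ((Vm β W m : Subgroup G) : Set G) := by
    ext z
    rw [Set.mem_iInter]
    constructor
    · intro h
      refine mem_minusPart_Vm.2 fun w hw => ?_
      rcases le_or_gt 1 w with h1 | h1
      · have h2 := (h w.toNat).2 w.toNat (by omega) le_rfl
        have e : ((w.toNat : ℕ) : ℤ) = w := by omega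
        rwa [e] at h2
      · have h2 := mem_Vm_set.1 (h 0).1 (-w).toNat (by omega)
        have e : (-(((-w).toNat : ℕ) : ℤ)) = w := by omega
        rwa [e] at h2
    · intro h j
      refine ⟨mem_Vm_set.2 fun k hk => ?_, fun i h1 _ => ?_⟩
      · exact mem_minusPart_Vm.1 h _ (by omega)
      · exact mem_minusPart_Vm.1 h _ (by omega)
  rwa [hiInter] at hmem

include hc hWc hWo in
lemma Vm_sub_iter (n₀ : ℕ) (hstab : ∀ m, n₀ ≤ m → tcount β W (m + 1) = tcount β W m)
    (m : ℕ) (hm : n₀ ≤ m) :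
    ∀ k : ℕ, ((Vm β W m : Subgroup G) : Set G) ⊆
      ((Vm β W (m + k) : Subgroup G) : Set G) *
        minusPart β ((Vm β W m : Subgroup G) : Set G) := by
  intro k
  induction k with
  | zero =>
    intro x hx
    refine ⟨x, hx, 1, ?_, mul_one x⟩
    rw [← coe_minusSub]
    exact Subgroup.one_mem _
  | succ k ih =>
    intro x hx
    obtain ⟨a, ha, b, hb, hab₀⟩ := ih hx
    have hab : a * b = x := hab₀
    obtain ⟨a', ha', b', hb', hab₀'⟩ := Vm_sub_mul_minus hc hWc hWo n₀ hstab (m + k) (by omega) ha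
    have hab' : a' * b' = a := hab₀'
    refine ⟨a', ha', b' * b, ?_, ?_⟩
    · have hb'' : b' ∈ minusPart β ((Vm β W m : Subgroup G) : Set G) :=
        minusPart_Vm_antitone (by omega) hb'
      rw [← coe_minusSub] at hb'' hb ⊢
      exact Subgroup.mul_mem _ hb'' hb
    · show a' * (b' * b) = x
      rw [← mul_assoc, hab', hab]

include hc hWc hWo in
lemma tidyAbove_Vm (n₀ : ℕ) (hstab : ∀ m, n₀ ≤ m → tcount β W (m + 1) = tcount β W m)
    (m : ℕ) (hm : n₀ ≤ m) : TidyAbove β ((Vm β W m : Subgroup G) : Set G) := by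
  have hplus : (⋂ k : ℕ, ((Vm β W (m + k) : Subgroup G) : Set G)) =
      plusPart β ((Vm β W m : Subgroup G) : Set G) := by
    ext x
    rw [Set.mem_iInter]
    constructor
    · intro h
      refine mem_plusPart_Vm.2 fun z hz => ?_
      have h2 := mem_Vm_set.1 (h (-z).toNat) (-z).toNat (by omega)
      have e : (-(((-z).toNat : ℕ) : ℤ)) = z := by omega
      rwa [e] at h2
    · intro h k
      exact mem_Vm_set.2 fun k' _ => mem_plusPart_Vm.1 h _ (by omega)
  unfold TidyAbove
  apply Set.Subset.antisymm
  · intro x hx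
    have hk : ∀ k : ℕ, x⁻¹ ∈ minusPart β ((Vm β W m : Subgroup G) : Set G) *
        ((Vm β W (m + k) : Subgroup G) : Set G) := by
      intro k
      obtain ⟨a, ha, b, hb, hab₀⟩ := Vm_sub_iter hc hWc hWo n₀ hstab m hm k hx
      have hab : a * b = x := hab₀
      refine ⟨b⁻¹, ?_, a⁻¹, ?_, ?_⟩
      · rw [← coe_minusSub] at hb ⊢
        exact Subgroup.inv_mem _ hb
      · exact SetLike.mem_coe.2 (Subgroup.inv_mem _ (SetLike.mem_coe.1 ha))
      · show b⁻¹ * a⁻¹ = x⁻¹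
        rw [← mul_inv_rev, hab]
    have hmem := mem_mul_iInter (isCompact_minusPart hc (Vm_isCompact hc hWc m))
      (fun k => Vm_isCompact hc hWc (m + k))
      (fun i j => ⟨max i j, Vm_mono (by omega), Vm_mono (by omega)⟩) hk
    rw [hplus] at hmem
    obtain ⟨u, hu, v, hv, huv₀⟩ := hmem
    have huv : u * v = x⁻¹ := huv₀
    have hx_eq : x = v⁻¹ * u⁻¹ := by
      have : x⁻¹ = u * v := huv.symm
      rw [← mul_inv_rev, ← this, inv_inv]
    rw [hx_eq]
    refine ⟨v⁻¹, ?_, u⁻¹, ?_, rfl⟩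
    · rw [← coe_plusSub] at hv ⊢
      exact Subgroup.inv_mem _ hv
    · rw [← coe_minusSub] at hu ⊢
      exact Subgroup.inv_mem _ hu
  · rintro x ⟨a, ha, b, hb, rfl⟩
    exact SetLike.mem_coe.2 (Subgroup.mul_mem _
      (SetLike.mem_coe.1 (plusPart_subset ha)) (SetLike.mem_coe.1 (minusPart_subset hb)))

include hc hWc hWo in
lemma exists_tidyAbove :
    ∃ n₀ : ℕ, ∀ m, n₀ ≤ m → TidyAbove β ((Vm β W m : Subgroup G) : Set G) := by
  have hanti : Antitone (tcount β W) := antitone_nat_of_succ_le (tcount_antitone hc hWc hWo)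
  obtain ⟨n₀, hn₀⟩ : ∃ n₀, tcount β W n₀ = sInf (Set.range (tcount β W)) := by
    have := Nat.sInf_mem (Set.range_nonempty (tcount β W))
    obtain ⟨n₀, hn₀⟩ := this
    exact ⟨n₀, hn₀⟩
  have hconst : ∀ m, n₀ ≤ m → tcount β W m = tcount β W n₀ := by
    intro m hm
    have h1 : tcount β W m ≤ tcount β W n₀ := hanti hm
    have h2 : tcount β W n₀ ≤ tcount β W m := by
      rw [hn₀]
      exact csInf_le (OrderBot.bddBelow _) ⟨m, rfl⟩
    omega
  refine ⟨n₀, fun m hm => tidyAbove_Vm hc hWc hWo n₀ (fun m' hm' => ?_) m hm⟩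
  rw [hconst (m' + 1) (by omega), hconst m' hm']

end TidyingAbove2


section PlusPlus

variable [Group G]

lemma mem_pow_image_plusPart {β : MulAut G} {T : Subgroup G} {k : ℕ} {x : G} :
    x ∈ ⇑(β ^ k) '' plusPart β (T : Set G) ↔ ∀ w : ℤ, w ≤ -(k : ℤ) → (β ^ w) x ∈ T := by
  rw [mem_autImage, npow_inv_eq, mem_plusPart_iff']
  constructor
  · intro h w hw
    have h2 := h (w + k) (by omega)
    rw [zpow_apply_zpow_apply] at h2
    have e : w + (k : ℤ) + -(k : ℤ) = w := by ring
    rwa [e] at h2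
  · intro h z hz
    rw [zpow_apply_zpow_apply]
    exact h _ (by omega)

/-- `V₊₊` as a subgroup. -/
def plusPlusSub (β : MulAut G) (T : Subgroup G) : Subgroup G where
  carrier := {x : G | ∃ a : ℤ, ∀ w : ℤ, w ≤ a → (β ^ w) x ∈ T}
  one_mem' := ⟨0, fun w _ => by simpa using T.one_mem⟩
  mul_mem' := by
    rintro x y ⟨a, ha⟩ ⟨b, hb⟩
    refine ⟨min a b, fun w hw => ?_⟩
    rw [map_mul]
    exact T.mul_mem (ha w (hw.trans (min_le_left a b))) (hb w (hw.trans (min_le_right a b)))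
  inv_mem' := by
    rintro x ⟨a, ha⟩
    refine ⟨a, fun w hw => ?_⟩
    rw [map_inv]
    exact T.inv_mem (ha w hw)

lemma mem_plusPlusSub {β : MulAut G} {T : Subgroup G} {x : G} :
    x ∈ plusPlusSub β T ↔ ∃ a : ℤ, ∀ w : ℤ, w ≤ a → (β ^ w) x ∈ T := Iff.rfl

lemma coe_plusPlusSub (β : MulAut G) (T : Subgroup G) :
    ((plusPlusSub β T : Subgroup G) : Set G) = ⋃ k : ℕ, ⇑(β ^ k) '' plusPart β (T : Set G) := by
  ext x
  rw [SetLike.mem_coe, mem_plusPlusSub, Set.mem_iUnion]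
  constructor
  · rintro ⟨a, ha⟩
    refine ⟨(-a).toNat, mem_pow_image_plusPart.2 fun w hw => ha w (by omega)⟩
  · rintro ⟨k, hk⟩
    exact ⟨-(k : ℤ), fun w hw => mem_pow_image_plusPart.1 hk w hw⟩

lemma pow_image_plusPart_mono {β : MulAut G} {T : Subgroup G} {k l : ℕ} (h : k ≤ l) :
    ⇑(β ^ k) '' plusPart β (T : Set G) ⊆ ⇑(β ^ l) '' plusPart β (T : Set G) := by
  intro x hx
  exact mem_pow_image_plusPart.2 fun w hw => mem_pow_image_plusPart.1 hx w (by omega)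

end PlusPlus

section Baire

variable [Group G] [TopologicalSpace G] [IsTopologicalGroup G] [T2Space G] [LocallyCompactSpace G]
variable {β : MulAut G} (hc : ∀ z : ℤ, Continuous ⇑(β ^ z))

include hc in
lemma isClosed_pow_image_plusPart {T : Subgroup G} (hTc : IsCompact (T : Set G)) (k : ℕ) :
    IsClosed (⇑(β ^ k) '' plusPart β (T : Set G)) := by
  have e : (β ^ k : MulAut G) = β ^ (k : ℤ) := (zpow_natCast β k).symm
  rw [e]
  exact isClosed_autImage hc _ (isCompact_plusPart hc hTc).isClosed

include hc in
lemma compact_subset_plusPlus {T : Subgroup G} (hTc : IsCompact (T : Set G))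
    (hPPclosed : IsClosed (⋃ k : ℕ, ⇑(β ^ k) '' plusPart β (T : Set G)))
    {Z : Set G} (hZc : IsCompact Z)
    (hZ : Z ⊆ ⋃ k : ℕ, ⇑(β ^ k) '' plusPart β (T : Set G)) :
    ∃ K : ℕ, Z ⊆ ⇑(β ^ K) '' plusPart β (T : Set G) := by
  classical
  set J : Subgroup G := Subgroup.closure Z with hJ
  set H' : Subgroup G := J.topologicalClosure with hH'
  have hZPP : Z ⊆ ((plusPlusSub β T : Subgroup G) : Set G) := by
    rw [coe_plusPlusSub]; exact hZ
  have hJle : J ≤ plusPlusSub β T := (Subgroup.closure_le _).2 hZPP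
  have hH'le : H' ≤ plusPlusSub β T := by
    refine Subgroup.topologicalClosure_minimal J hJle ?_
    rw [coe_plusPlusSub]
    exact hPPclosed
  have hSclosed : IsClosed ((H' : Subgroup G) : Set G) := Subgroup.isClosed_topologicalClosure J
  have hZS : Z ⊆ ((H' : Subgroup G) : Set G) := fun z hz =>
    Subgroup.le_topologicalClosure J (Subgroup.subset_closure hz)
  -- Baire category on the closed subgroup `H'`
  haveI : LocallyCompactSpace ((H' : Subgroup G) : Set G) := hSclosed.locallyCompactSpace
  haveI : Nonempty ((H' : Subgroup G) : Set G) := ⟨⟨1, H'.one_mem⟩⟩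
  have hcover : (⋃ k : ℕ, (Subtype.val ⁻¹'
      (⇑(β ^ k) '' plusPart β (T : Set G)) : Set ((H' : Subgroup G) : Set G))) = Set.univ := by
    refine Set.eq_univ_of_forall fun s => ?_
    have hs : (s : G) ∈ ((plusPlusSub β T : Subgroup G) : Set G) := hH'le s.2
    rw [coe_plusPlusSub] at hs
    obtain ⟨k, hk⟩ := Set.mem_iUnion.1 hs
    exact Set.mem_iUnion.2 ⟨k, hk⟩
  obtain ⟨k₀, hk₀⟩ := nonempty_interior_of_iUnion_of_closed
    (fun k => (isClosed_pow_image_plusPart hc hTc k).preimage continuous_subtype_val) hcover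
  obtain ⟨p, hp⟩ := hk₀
  obtain ⟨Ω, hΩopen, hΩeq⟩ := isOpen_induced_iff.1
    (isOpen_interior (s := (Subtype.val ⁻¹'
      (⇑(β ^ k₀) '' plusPart β (T : Set G)) : Set ((H' : Subgroup G) : Set G))))
  have hpΩ : (p : G) ∈ Ω := by
    have : p ∈ Subtype.val ⁻¹' Ω := by rw [hΩeq]; exact hp
    exact this
  have hkey : ∀ h : G, h ∈ H' → h ∈ Ω → h ∈ ⇑(β ^ k₀) '' plusPart β (T : Set G) := by
    intro h hmem hΩh
    have h1 : (⟨h, hmem⟩ : ((H' : Subgroup G) : Set G)) ∈ Subtype.val ⁻¹' Ω := hΩh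
    rw [hΩeq] at h1
    have h2 : (⟨h, hmem⟩ : ((H' : Subgroup G) : Set G)) ∈ Subtype.val ⁻¹'
        (⇑(β ^ k₀) '' plusPart β (T : Set G)) := interior_subset h1
    exact h2
  have hg₀P : (p : G) ∈ ⇑(β ^ k₀) '' plusPart β (T : Set G) := hkey p p.2 hpΩ
  -- cover Z by finitely many translates
  have hnhds : ∀ x ∈ Z, (fun y => (p : G) * x⁻¹ * y) ⁻¹' Ω ∈ nhds x := by
    intro x hx
    refine IsOpen.mem_nhds (hΩopen.preimage (continuous_const.mul continuous_id)) ?_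
    show (p : G) * x⁻¹ * x ∈ Ω
    simpa using hpΩ
  obtain ⟨t, htZ, hcov⟩ := hZc.elim_nhds_subcover _ hnhds
  choose! lvl hlvl using fun x (hx : x ∈ Z) => Set.mem_iUnion.1 (hZ hx)
  refine ⟨max k₀ (t.sup lvl), ?_⟩
  intro z hz
  obtain ⟨x, hxt, hxz⟩ := Set.mem_iUnion₂.1 (hcov hz)
  have hxZ : x ∈ Z := htZ x hxt
  have hω : (p : G) * x⁻¹ * z ∈ Ω := hxz
  have hωH : (p : G) * x⁻¹ * z ∈ H' :=
    H'.mul_mem (H'.mul_mem p.2 (H'.inv_mem (hZS hxZ))) (hZS hz)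
  have hωP : (p : G) * x⁻¹ * z ∈ ⇑(β ^ k₀) '' plusPart β (T : Set G) := hkey _ hωH hω
  have hz_eq : z = x * (p : G)⁻¹ * ((p : G) * x⁻¹ * z) := by group
  rw [hz_eq]
  refine mem_pow_image_plusPart.2 fun w hw => ?_
  rw [map_mul, map_mul, map_inv]
  refine T.mul_mem (T.mul_mem ?_ (T.inv_mem ?_)) ?_
  · exact mem_pow_image_plusPart.1 (hlvl x hxZ) w
      (by have := Finset.le_sup (f := lvl) hxt; omega)
  · exact mem_pow_image_plusPart.1 hg₀P w (by omega)
  · exact mem_pow_image_plusPart.1 hωP w (by omega)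

include hc in
lemma forward_orbit_in_plusPart {T : Subgroup G} (hTc : IsCompact (T : Set G))
    (hPPclosed : IsClosed (⋃ k : ℕ, ⇑(β ^ k) '' plusPart β (T : Set G)))
    {h₀ : G} (hmem : h₀ ∈ plusPart β (T : Set G))
    {C : Set G} (hCc : IsCompact C) (horb : ∀ z : ℤ, (β ^ z) h₀ ∈ C) :
    ∀ z : ℤ, (β ^ z) h₀ ∈ plusPart β (T : Set G) := by
  set Z := closure (Set.range fun z : ℤ => (β ^ z) h₀) with hZdef
  have hZc : IsCompact Z := hCc.of_isClosed_subset isClosed_closure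
    (closure_minimal (by rintro x ⟨z, rfl⟩; exact horb z) hCc.isClosed)
  have hrangePP : (Set.range fun z : ℤ => (β ^ z) h₀) ⊆
      ⋃ k : ℕ, ⇑(β ^ k) '' plusPart β (T : Set G) := by
    rintro x ⟨z, rfl⟩
    have : (β ^ z) h₀ ∈ ((plusPlusSub β T : Subgroup G) : Set G) := by
      rw [SetLike.mem_coe, mem_plusPlusSub]
      refine ⟨-z, fun w hw => ?_⟩
      rw [zpow_apply_zpow_apply]
      have := mem_plusPart_iff'.1 hmem (w + z) (by omega)
      exact this
    rwa [coe_plusPlusSub] at this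
  have hZPP : Z ⊆ ⋃ k : ℕ, ⇑(β ^ k) '' plusPart β (T : Set G) :=
    closure_minimal hrangePP hPPclosed
  obtain ⟨K, hK⟩ := compact_subset_plusPlus hc hTc hPPclosed hZc hZPP
  intro z
  refine mem_plusPart_iff'.2 fun w hw => ?_
  rw [zpow_apply_zpow_apply]
  have h1 : (β ^ (w + z + K)) h₀ ∈ ⇑(β ^ K) '' plusPart β (T : Set G) :=
    hK (subset_closure (Set.mem_range_self _))
  have h2 := mem_pow_image_plusPart.1 h1 (-(K : ℤ)) le_rfl
  rw [zpow_apply_zpow_apply] at h2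
  have e : -(K : ℤ) + (w + z + K) = w + z := by ring
  rwa [e] at h2

end Baire


section Symmetry

variable [Group G]

lemma hc_inv {β : MulAut G} [TopologicalSpace G] (hc : ∀ z : ℤ, Continuous ⇑(β ^ z)) :
    ∀ z : ℤ, Continuous ⇑(β⁻¹ ^ z) := by
  intro z
  have e : β⁻¹ ^ z = β ^ (-z) := by rw [inv_zpow, zpow_neg]
  rw [e]
  exact hc (-z)

lemma inv_zpow_eq_zpow_neg (β : MulAut G) (z : ℤ) : β⁻¹ ^ z = β ^ (-z) := by
  rw [inv_zpow, zpow_neg]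

lemma tidyAbove_inv {α : MulAut G} {T : Subgroup G} (h : TidyAbove α (T : Set G)) :
    TidyAbove α⁻¹ (T : Set G) := by
  unfold TidyAbove at h ⊢
  rw [plusPart_inv, minusPart_inv]
  apply Set.Subset.antisymm
  · intro x hx
    have hxinv : x⁻¹ ∈ (T : Set G) := SetLike.mem_coe.2 (T.inv_mem (SetLike.mem_coe.1 hx))
    rw [h] at hxinv
    obtain ⟨p, hp, m, hm, hpm₀⟩ := hxinv
    have hpm : p * m = x⁻¹ := hpm₀
    have hx_eq : x = m⁻¹ * p⁻¹ := by
      rw [← mul_inv_rev, hpm, inv_inv]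
    rw [hx_eq]
    refine ⟨m⁻¹, ?_, p⁻¹, ?_, rfl⟩
    · rw [← coe_minusSub] at hm ⊢
      exact Subgroup.inv_mem _ hm
    · rw [← coe_plusSub] at hp ⊢
      exact Subgroup.inv_mem _ hp
  · rintro x ⟨m, hm, p, hp, rfl⟩
    exact SetLike.mem_coe.2 (T.mul_mem (SetLike.mem_coe.1 (minusPart_subset hm))
      (SetLike.mem_coe.1 (plusPart_subset hp)))

lemma tidy_inv [TopologicalSpace G] {α : MulAut G} {T : Subgroup G} (h : Tidy α (T : Set G)) :
    Tidy α⁻¹ (T : Set G) := by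
  refine ⟨tidyAbove_inv h.1, ?_, ?_⟩
  · exact h.2.2
  · rw [minusPart_inv, inv_inv]
    exact h.2.1

/-- The family of tidy compact open subgroups. -/
def tidyFam [TopologicalSpace G] (α : MulAut G) : Set (Subgroup G) :=
  {V : Subgroup G | IsCompact (V : Set G) ∧ IsOpen (V : Set G) ∧ Tidy α (V : Set G)}

lemma nub_coe [TopologicalSpace G] (α : MulAut G) :
    ((nub α : Subgroup G) : Set G) = ⋂ T ∈ tidyFam α, (T : Set G) := by
  unfold nub tidyFam
  rw [Subgroup.coe_iInf]
  exact Set.iInter_congr fun T => Subgroup.coe_iInf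

lemma tidyFam_inv [TopologicalSpace G] (α : MulAut G) : tidyFam α⁻¹ = tidyFam α := by
  unfold tidyFam
  ext T
  simp only [Set.mem_setOf_eq]
  constructor
  · rintro ⟨h1, h2, h3⟩
    refine ⟨h1, h2, ?_⟩
    have := tidy_inv h3
    rwa [inv_inv] at this
  · rintro ⟨h1, h2, h3⟩
    exact ⟨h1, h2, tidy_inv h3⟩

lemma nub_inv [TopologicalSpace G] (α : MulAut G) : nub α⁻¹ = nub α := by
  have h : ∀ γ : MulAut G, nub γ = ⨅ T ∈ tidyFam γ, T := fun γ => rfl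
  rw [h, h, tidyFam_inv]

end Symmetry

section Eprime

variable [Group G] [TopologicalSpace G] [IsTopologicalGroup G] [T2Space G] [LocallyCompactSpace G]
variable {β : MulAut G} (hc : ∀ z : ℤ, Continuous ⇑(β ^ z))

include hc in
/-- A bounded element of a tidy subgroup has its whole orbit inside the subgroup. -/
lemma orbit_subset_of_bounded_mem {T : Subgroup G} (hTc : IsCompact (T : Set G))
    (htidy : Tidy β (T : Set G)) {h : G} {C : Set G} (hCc : IsCompact C)
    (horb : ∀ z : ℤ, (β ^ z) h ∈ C) (hhT : h ∈ T) : ∀ z : ℤ, (β ^ z) h ∈ T := by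
  have hh2 : h ∈ plusPart β (T : Set G) * minusPart β (T : Set G) := by
    rw [← htidy.1]
    exact SetLike.mem_coe.2 hhT
  obtain ⟨p', hp', m', hm', hpm₀⟩ := hh2
  have hpm : p' * m' = h := hpm₀
  have hp'eq : p' = h * m'⁻¹ := by rw [← hpm]; group
  have hm'eq : m' = p'⁻¹ * h := by rw [← hpm]; group
  -- forward boundedness of p'
  set Cp : Set G := (T : Set G) ∪ ((fun p : G × G => p.1 * p.2⁻¹) '' (C ×ˢ (T : Set G))) with hCp
  have hCpc : IsCompact Cp := hTc.union ((hCc.prod hTc).image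
    (continuous_fst.mul continuous_snd.inv))
  have horbp : ∀ z : ℤ, (β ^ z) p' ∈ Cp := by
    intro z
    rcases le_or_gt z 0 with hz | hz
    · exact Set.mem_union_left _ (mem_plusPart_iff'.1 hp' z hz)
    · refine Set.mem_union_right _ ?_
      refine ⟨((β ^ z) h, (β ^ z) m'), ⟨horb z, mem_minusPart_iff'.1 hm' z hz.le⟩, ?_⟩
      show (β ^ z) h * ((β ^ z) m')⁻¹ = (β ^ z) p'
      rw [← map_inv, ← map_mul, ← hp'eq]
  have hplus := forward_orbit_in_plusPart hc hTc htidy.2.1 hp' hCpc horbp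
  -- backward boundedness of m'
  set Cm : Set G := (T : Set G) ∪ ((fun p : G × G => p.1⁻¹ * p.2) '' ((T : Set G) ×ˢ C)) with hCm
  have hCmc : IsCompact Cm := hTc.union ((hTc.prod hCc).image
    (continuous_fst.inv.mul continuous_snd))
  have horbm : ∀ z : ℤ, (β⁻¹ ^ z) m' ∈ Cm := by
    intro z
    rw [inv_zpow_eq_zpow_neg]
    rcases le_or_gt z 0 with hz | hz
    · exact Set.mem_union_left _ (mem_minusPart_iff'.1 hm' (-z) (by omega))
    · refine Set.mem_union_right _ ?_
      refine ⟨((β ^ (-z)) p', (β ^ (-z)) h), ⟨mem_plusPart_iff'.1 hp' (-z) (by omega), horb (-z)⟩, ?_⟩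
      show ((β ^ (-z)) p')⁻¹ * (β ^ (-z)) h = (β ^ (-z)) m'
      rw [← map_inv, ← map_mul, ← hm'eq]
  have hmem₂ : m' ∈ plusPart β⁻¹ (T : Set G) := hm'
  have hPP₂ : IsClosed (⋃ k : ℕ, ⇑(β⁻¹ ^ k) '' plusPart β⁻¹ (T : Set G)) := htidy.2.2
  have hminus := forward_orbit_in_plusPart (β := β⁻¹) (hc_inv hc) hTc hPP₂ hmem₂ hCmc horbm
  intro z
  have h1 : (β ^ z) p' ∈ plusPart β (T : Set G) := hplus z
  have h2 : (β ^ z) m' ∈ minusPart β (T : Set G) := by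
    have := hminus (-z)
    rwa [inv_zpow_eq_zpow_neg, neg_neg, plusPart_inv] at this
  have h3 : (β ^ z) h ∈ plusPart β (T : Set G) * minusPart β (T : Set G) := by
    refine ⟨(β ^ z) p', h1, (β ^ z) m', h2, ?_⟩
    show (β ^ z) p' * (β ^ z) m' = (β ^ z) h
    rw [← map_mul, hpm]
  rw [← htidy.1] at h3
  exact SetLike.mem_coe.1 h3

end Eprime


section GapCore

variable [Group G] [TopologicalSpace G] [IsTopologicalGroup G] [T2Space G] [LocallyCompactSpace G]
variable {α : MulAut G} (hc : ∀ z : ℤ, Continuous ⇑(α ^ z))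

include hc in
/-- Core lemma: an element of `V₋ ∩ V₊₊` has its whole orbit in `V`, provided `nub α ⊆ V`. -/
lemma gap_core (hfam : (tidyFam α).Nonempty)
    {V : Subgroup G} (hVc : IsCompact (V : Set G))
    (hnubV : ((nub α : Subgroup G) : Set G) ⊆ (V : Set G))
    {g : G} (hgminus : g ∈ minusPart α (V : Set G))
    {l : ℕ} (hgpp : g ∈ ⇑(α ^ l) '' plusPart α (V : Set G)) :
    ∀ z : ℤ, (α ^ z) g ∈ (V : Set G) := by
  classical
  set Cg : Set G := ⇑(α ^ l) '' plusPart α (V : Set G) ∪ minusPart α (V : Set G) with hCg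
  have hCgc : IsCompact Cg := by
    have h1 : IsCompact (⇑(α ^ l) '' plusPart α (V : Set G)) := by
      have e : (α ^ l : MulAut G) = α ^ (l : ℤ) := (zpow_natCast α l).symm
      rw [e]
      exact isCompact_autImage hc _ (isCompact_plusPart hc hVc)
    exact h1.union (isCompact_minusPart hc hVc)
  have horbg : ∀ z : ℤ, (α ^ z) g ∈ Cg := by
    intro z
    rcases le_or_gt z 0 with hz | hz
    · refine Set.mem_union_left _ (mem_pow_image_plusPart.2 fun w hw => ?_)
      rw [zpow_apply_zpow_apply]
      exact mem_pow_image_plusPart.1 hgpp (w + z) (by omega)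
    · refine Set.mem_union_right _ (mem_minusPart_iff'.2 fun w hw => ?_)
      rw [zpow_apply_zpow_apply]
      exact mem_minusPart_iff'.1 hgminus (w + z) (by omega)
  obtain ⟨𝒰, h𝒰⟩ := Ultrafilter.exists_le (atTop : Filter ℕ)
  set u : ℕ → G := fun j => (α ^ (j : ℤ)) g with hu
  have humem : ∀ j, u j ∈ minusPart α (V : Set G) := by
    intro j
    refine mem_minusPart_iff'.2 fun w hw => ?_
    rw [hu, zpow_apply_zpow_apply]
    exact mem_minusPart_iff'.1 hgminus (w + j) (by omega)
  have hle : ↑(𝒰.map u) ≤ Filter.principal (minusPart α (V : Set G)) := by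
    rw [Filter.le_principal_iff]
    refine Filter.mem_map.2 ?_
    have he : u ⁻¹' (minusPart α (V : Set G)) = Set.univ :=
      Set.eq_univ_of_forall fun j => humem j
    rw [he]
    exact Filter.univ_mem
  obtain ⟨zs, hzsmem, hzsconv⟩ := (isCompact_minusPart hc hVc).ultrafilter_le_nhds (𝒰.map u) hle
  have hTendsto : Filter.Tendsto u (↑𝒰 : Filter ℕ) (𝓝 zs) := by
    rw [Filter.Tendsto, ← Ultrafilter.coe_map]
    exact hzsconv
  have hzscore : ∀ w : ℤ, (α ^ w) zs ∈ minusPart α (V : Set G) := by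
    intro w
    have hT2 : Filter.Tendsto (fun j => (α ^ w) (u j)) (↑𝒰 : Filter ℕ) (𝓝 ((α ^ w) zs)) :=
      ((hc w).tendsto zs).comp hTendsto
    refine (isCompact_minusPart hc hVc).isClosed.mem_of_tendsto hT2 ?_
    have hev : ∀ᶠ j in (atTop : Filter ℕ), (α ^ w) (u j) ∈ minusPart α (V : Set G) := by
      refine Filter.eventually_atTop.2 ⟨(-w).toNat, fun j hj => ?_⟩
      rw [hu, zpow_apply_zpow_apply]
      refine mem_minusPart_iff'.2 fun v hv => ?_
      rw [zpow_apply_zpow_apply]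
      exact mem_minusPart_iff'.1 hgminus (v + (w + j)) (by omega)
    exact hev.filter_mono h𝒰
  obtain ⟨T₀, hT₀⟩ := hfam
  haveI hJne : Nonempty {F : Finset (Subgroup G) //
      (∀ T ∈ F, T ∈ tidyFam α) ∧ F.Nonempty} :=
    ⟨⟨{T₀}, fun T hT => by rwa [Finset.mem_singleton.1 hT], Finset.singleton_nonempty T₀⟩⟩
  set CF : {F : Finset (Subgroup G) // (∀ T ∈ F, T ∈ tidyFam α) ∧ F.Nonempty} → Set G :=
    fun F => {x : G | ∀ T ∈ F.1, ∀ w : ℤ, (α ^ w) x ∈ T} with hCFdef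
  have hCFclosed : ∀ F, IsClosed (CF F) := by
    intro F
    have he : CF F = ⋂ T ∈ F.1, ⋂ w : ℤ, (fun x => (α ^ w) x) ⁻¹' (T : Set G) := by
      ext x
      simp only [hCFdef, Set.mem_setOf_eq, Set.mem_iInter, Set.mem_preimage, SetLike.mem_coe]
    rw [he]
    exact isClosed_biInter fun T hT => isClosed_iInter fun w =>
      ((F.2.1 T hT).1.isClosed).preimage (hc w)
  have hCFcompact : ∀ F, IsCompact (CF F) := by
    intro F
    obtain ⟨T₁, hT₁⟩ := F.2.2
    refine ((F.2.1 T₁ hT₁).1).of_isClosed_subset (hCFclosed F) ?_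
    intro x hx
    have h0 := hx T₁ hT₁ 0
    simpa using h0
  have hCFdir : ∀ F F', ∃ F'', CF F'' ⊆ CF F ∧ CF F'' ⊆ CF F' := by
    intro F F'
    refine ⟨⟨F.1 ∪ F'.1, fun T hT => ?_, F.2.2.mono Finset.subset_union_left⟩, ?_, ?_⟩
    · rcases Finset.mem_union.1 hT with h | h
      exacts [F.2.1 T h, F'.2.1 T h]
    · intro x hx T hT w
      exact hx T (Finset.mem_union_left _ hT) w
    · intro x hx T hT w
      exact hx T (Finset.mem_union_right _ hT) w
  have hkeyF : ∀ F, ∀ z : ℤ, (α ^ z) g ∈ minusPart α (V : Set G) * CF F := by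
    intro F z
    have hDopen : IsOpen (⋂ T ∈ F.1, (T : Set G)) :=
      isOpen_biInter_finset fun T hT => (F.2.1 T hT).2.1
    have hD1 : (1 : G) ∈ ⋂ T ∈ F.1, (T : Set G) :=
      Set.mem_iInter₂.2 fun T _ => T.one_mem
    have htend1 : Filter.Tendsto (fun j => zs⁻¹ * u j) (↑𝒰 : Filter ℕ) (𝓝 1) := by
      have h2 : Filter.Tendsto (fun j => zs⁻¹ * u j) (↑𝒰 : Filter ℕ) (𝓝 (zs⁻¹ * zs)) :=
        hTendsto.const_mul zs⁻¹
      simpa using h2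
    have hev : ∀ᶠ j in (↑𝒰 : Filter ℕ), zs⁻¹ * u j ∈ ⋂ T ∈ F.1, (T : Set G) :=
      htend1 (hDopen.mem_nhds hD1)
    obtain ⟨j₀, hj₀⟩ := hev.exists
    have hdorb : ∀ w : ℤ, (α ^ w) (zs⁻¹ * u j₀) ∈ (fun p : G × G => p.1⁻¹ * p.2) ''
        ((minusPart α (V : Set G)) ×ˢ Cg) := by
      intro w
      refine ⟨((α ^ w) zs, (α ^ w) (u j₀)), ⟨hzscore w, ?_⟩, ?_⟩
      · show (α ^ w) (u j₀) ∈ Cg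
        rw [hu, zpow_apply_zpow_apply]
        exact horbg _
      · show ((α ^ w) zs)⁻¹ * (α ^ w) (u j₀) = (α ^ w) (zs⁻¹ * u j₀)
        rw [← map_inv, ← map_mul]
    have hdorbC : IsCompact ((fun p : G × G => p.1⁻¹ * p.2) ''
        ((minusPart α (V : Set G)) ×ˢ Cg)) :=
      ((isCompact_minusPart hc hVc).prod hCgc).image (continuous_fst.inv.mul continuous_snd)
    have hdcore : ∀ T ∈ F.1, ∀ w : ℤ, (α ^ w) (zs⁻¹ * u j₀) ∈ T := by
      intro T hT w
      have hdT : zs⁻¹ * u j₀ ∈ T := SetLike.mem_coe.1 (Set.mem_iInter₂.1 hj₀ T hT)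
      exact orbit_subset_of_bounded_mem hc (F.2.1 T hT).1 (F.2.1 T hT).2.2 hdorbC hdorb hdT w
    refine ⟨(α ^ (z - j₀)) zs, hzscore _, (α ^ (z - j₀)) (zs⁻¹ * u j₀), ?_, ?_⟩
    · intro T hT w
      rw [zpow_apply_zpow_apply]
      exact hdcore T hT _
    · show (α ^ (z - j₀)) zs * (α ^ (z - j₀)) (zs⁻¹ * u j₀) = (α ^ z) g
      have e1 : zs * (zs⁻¹ * u j₀) = u j₀ := by group
      rw [← map_mul, e1, hu, zpow_apply_zpow_apply]
      have e2 : z - (j₀ : ℤ) + (j₀ : ℤ) = z := by ring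
      rw [e2]
  intro z
  have hmem := mem_mul_iInter (isCompact_minusPart hc hVc) hCFcompact hCFdir
    (fun F => hkeyF F z)
  obtain ⟨a, ha, b, hb, hab₀⟩ := hmem
  have hab : a * b = (α ^ z) g := hab₀
  have hbV : b ∈ (V : Set G) := by
    have hbnub : b ∈ ((nub α : Subgroup G) : Set G) := by
      rw [nub_coe]
      refine Set.mem_iInter₂.2 fun T hT => ?_
      have hbF := Set.mem_iInter.1 hb
        ⟨{T}, fun T' hT' => by rwa [Finset.mem_singleton.1 hT'], Finset.singleton_nonempty T⟩
      have h0 := hbF T (Finset.mem_singleton_self T) 0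
      simpa using h0
    exact hnubV hbnub
  have haV : a ∈ (V : Set G) := minusPart_subset ha
  rw [← hab]
  exact SetLike.mem_coe.2 (V.mul_mem (SetLike.mem_coe.1 haV) (SetLike.mem_coe.1 hbV))

end GapCore


section Closedness

variable [Group G] [TopologicalSpace G] [IsTopologicalGroup G] [T2Space G] [LocallyCompactSpace G]
variable {α : MulAut G} (hc : ∀ z : ℤ, Continuous ⇑(α ^ z))

include hc in
lemma plusPlus_closed (hfam : (tidyFam α).Nonempty)
    {V : Subgroup G} (hVc : IsCompact (V : Set G)) (hVo : IsOpen (V : Set G))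
    (hnubV : ((nub α : Subgroup G) : Set G) ⊆ (V : Set G))
    (habove : TidyAbove α (V : Set G)) :
    IsClosed (⋃ k : ℕ, ⇑(α ^ k) '' plusPart α (V : Set G)) := by
  have stepA : (V : Set G) ∩ ((plusPlusSub α V : Subgroup G) : Set G) ⊆
      plusPart α (V : Set G) := by
    rintro w ⟨hwV, hwPP⟩
    have hw2 : w ∈ plusPart α (V : Set G) * minusPart α (V : Set G) := by
      rw [← habove]; exact hwV
    obtain ⟨p, hp, m, hm, hpm₀⟩ := hw2
    have hpm : p * m = w := hpm₀
    have hpPP : p ∈ plusPlusSub α V := by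
      rw [mem_plusPlusSub]
      exact ⟨0, fun z hz => mem_plusPart_iff'.1 hp z hz⟩
    have hmPP : m ∈ plusPlusSub α V := by
      have e : m = p⁻¹ * w := by rw [← hpm]; group
      rw [e]
      exact Subgroup.mul_mem _ (Subgroup.inv_mem _ hpPP) (SetLike.mem_coe.1 hwPP)
    have hmPP' : m ∈ ⋃ k : ℕ, ⇑(α ^ k) '' plusPart α (V : Set G) := by
      rw [← coe_plusPlusSub]
      exact SetLike.mem_coe.2 hmPP
    obtain ⟨l, hl⟩ := Set.mem_iUnion.1 hmPP'
    have hall := gap_core hc hfam hVc hnubV hm hl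
    have hmplus : m ∈ plusPart α (V : Set G) := mem_plusPart_iff'.2 fun z hz => hall z
    have hpS : p ∈ plusSub α V := by rw [← SetLike.mem_coe, coe_plusSub]; exact hp
    have hmS : m ∈ plusSub α V := by rw [← SetLike.mem_coe, coe_plusSub]; exact hmplus
    have hprod : p * m ∈ plusSub α V := Subgroup.mul_mem _ hpS hmS
    rw [← coe_plusSub α V, ← hpm]
    exact SetLike.mem_coe.2 hprod
  have stepB : (V : Set G) ∩ closure ((plusPlusSub α V : Subgroup G) : Set G) ⊆
      plusPart α (V : Set G) := by
    rintro x ⟨hxV, hxcl⟩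
    have hx2 : x ∈ closure (((plusPlusSub α V : Subgroup G) : Set G) ∩ (V : Set G)) := by
      rw [mem_closure_iff] at hxcl ⊢
      intro O hO hxO
      obtain ⟨y, hy⟩ := hxcl (O ∩ (V : Set G)) (hO.inter hVo) ⟨hxO, hxV⟩
      exact ⟨y, hy.1.1, hy.2, hy.1.2⟩
    have hsub : ((plusPlusSub α V : Subgroup G) : Set G) ∩ (V : Set G) ⊆
        plusPart α (V : Set G) := fun y hy => stepA ⟨hy.2, hy.1⟩
    have hx3 : x ∈ closure (plusPart α (V : Set G)) := closure_mono hsub hx2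
    rwa [IsClosed.closure_eq (isCompact_plusPart hc hVc).isClosed] at hx3
  refine isClosed_of_closure_subset ?_
  intro h hcl
  rw [← coe_plusPlusSub] at hcl
  have hO : IsOpen {x : G | h⁻¹ * x ∈ (V : Set G)} :=
    hVo.preimage (continuous_const.mul continuous_id)
  have hhO : h ∈ {x : G | h⁻¹ * x ∈ (V : Set G)} := by
    show h⁻¹ * h ∈ (V : Set G)
    simpa using SetLike.mem_coe.2 V.one_mem
  obtain ⟨y, hyO, hyPP⟩ := mem_closure_iff.1 hcl _ hO hhO
  have hvV : h⁻¹ * y ∈ (V : Set G) := hyO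
  have hclosure_mem : h ∈ (plusPlusSub α V).topologicalClosure := by
    rw [← SetLike.mem_coe, Subgroup.topologicalClosure_coe]
    exact hcl
  have hy_mem : y ∈ (plusPlusSub α V).topologicalClosure :=
    (plusPlusSub α V).le_topologicalClosure hyPP
  have hvcl : h⁻¹ * y ∈ closure ((plusPlusSub α V : Subgroup G) : Set G) := by
    have h3 : h⁻¹ * y ∈ (plusPlusSub α V).topologicalClosure :=
      Subgroup.mul_mem _ (Subgroup.inv_mem _ hclosure_mem) hy_mem
    rw [← SetLike.mem_coe, Subgroup.topologicalClosure_coe] at h3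
    exact h3
  have hvplus := stepB ⟨hvV, hvcl⟩
  have hvPP : h⁻¹ * y ∈ plusPlusSub α V := by
    rw [mem_plusPlusSub]
    exact ⟨0, fun z hz => mem_plusPart_iff'.1 hvplus z hz⟩
  have hhPP : h ∈ plusPlusSub α V := by
    have e : h = y * (h⁻¹ * y)⁻¹ := by group
    rw [e]
    exact Subgroup.mul_mem _ (SetLike.mem_coe.1 hyPP) (Subgroup.inv_mem _ hvPP)
  rw [← coe_plusPlusSub]
  exact SetLike.mem_coe.2 hhPP

end Closedness


section TopCase

variable [Group G]

lemma autImage_univ (β : MulAut G) : ⇑β '' (Set.univ : Set G) = Set.univ := by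
  ext x
  rw [mem_autImage]
  simp

lemma plusPart_univ (β : MulAut G) : plusPart β (Set.univ : Set G) = Set.univ := by
  unfold plusPart
  simp only [autImage_univ]
  exact Set.iInter_const _

lemma minusPart_univ (β : MulAut G) : minusPart β (Set.univ : Set G) = Set.univ := by
  unfold minusPart
  simp only [autImage_univ]
  exact Set.iInter_const _

lemma univ_mul_univ : (Set.univ : Set G) * Set.univ = Set.univ := by
  apply Set.Subset.antisymm (Set.subset_univ _)
  intro x _
  exact ⟨x, trivial, 1, trivial, mul_one x⟩

lemma top_tidy [TopologicalSpace G] (β : MulAut G) : Tidy β ((⊤ : Subgroup G) : Set G) := by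
  rw [Subgroup.coe_top]
  refine ⟨?_, ?_, ?_⟩
  · unfold TidyAbove
    rw [plusPart_univ, minusPart_univ, univ_mul_univ]
  · rw [plusPart_univ]
    simp only [autImage_univ, Set.iUnion_const]
    exact isClosed_univ
  · rw [minusPart_univ]
    simp only [autImage_univ, Set.iUnion_const]
    exact isClosed_univ

end TopCase

/-- If `N` is a compact `α`-stable subgroup containing `nub α`, then every
open set containing `N` contains a tidy compact open subgroup containing `N`. -/
theorem exists_tidy_between_of_nub_subset
    [Group G] [TopologicalSpace G] [IsTopologicalGroup G] [T2Space G]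
    [TotallyDisconnectedSpace G] [LocallyCompactSpace G]
    (α : MulAut G) (hαc : Continuous ⇑α) (hαc' : Continuous ⇑(α⁻¹))
    (N : Subgroup G) (hNc : IsCompact (N : Set G))
    (hNs : ⇑α '' (N : Set G) = (N : Set G))
    (hnub : (nub α : Set G) ⊆ (N : Set G)) :
    ∀ U : Set G, IsOpen U → (N : Set G) ⊆ U →
      ∃ V : Subgroup G, IsCompact (V : Set G) ∧ IsOpen (V : Set G) ∧
        Tidy α (V : Set G) ∧ (N : Set G) ⊆ (V : Set G) ∧ (V : Set G) ⊆ U := by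
  intro U hU hNU
  have hc : ∀ z : ℤ, Continuous ⇑(α ^ z) := continuous_aut_zpow hαc hαc'
  -- the family of tidy subgroups is nonempty
  have hfam : (tidyFam α).Nonempty := by
    by_contra hemp
    rw [Set.not_nonempty_iff_eq_empty] at hemp
    have hnubtop : ((nub α : Subgroup G) : Set G) = Set.univ := by
      rw [nub_coe, hemp]
      simp
    have hNuniv : (N : Set G) = Set.univ := Set.eq_univ_of_univ_subset (hnubtop ▸ hnub)
    have hGc : IsCompact (Set.univ : Set G) := hNuniv ▸ hNc
    have htop : (⊤ : Subgroup G) ∈ tidyFam α := by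
      refine ⟨by rwa [Subgroup.coe_top], by rw [Subgroup.coe_top]; exact isOpen_univ, top_tidy α⟩
    rw [hemp] at htop
    exact htop
  -- stability of N under all powers of α
  have hstep : ∀ x ∈ (N : Set G), α x ∈ (N : Set G) := by
    intro x hx
    rw [← hNs]
    exact ⟨x, hx, rfl⟩
  have hstep' : ∀ x ∈ (N : Set G), α⁻¹ x ∈ (N : Set G) := by
    intro x hx
    rw [← hNs] at hx
    obtain ⟨y, hy, rfl⟩ := hx
    simpa using hy
  have hfwd : ∀ n : ℕ, ∀ x ∈ (N : Set G), (α ^ (n : ℤ)) x ∈ (N : Set G) := by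
    intro n
    induction n with
    | zero => intro x hx; simpa using hx
    | succ n ih =>
      intro x hx
      have h1 := hstep _ (ih x hx)
      have h2 := zpow_apply_zpow_apply α 1 (n : ℤ) x
      rw [zpow_one] at h2
      rw [h2, show (1 : ℤ) + (n : ℤ) = ((n + 1 : ℕ) : ℤ) by omega] at h1
      exact h1
  have hbwd : ∀ n : ℕ, ∀ x ∈ (N : Set G), (α ^ (-(n : ℤ))) x ∈ (N : Set G) := by
    intro n
    induction n with
    | zero => intro x hx; simpa using hx
    | succ n ih =>
      intro x hx
      have h1 := hstep' _ (ih x hx)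
      have h2 := zpow_apply_zpow_apply α (-1) (-(n : ℤ)) x
      rw [show (α : MulAut G) ^ (-1 : ℤ) = α⁻¹ from zpow_neg_one α] at h2
      rw [h2, show (-1 : ℤ) + (-(n : ℤ)) = (-((n + 1 : ℕ) : ℤ)) by omega] at h1
      exact h1
  have hNstable : ∀ z : ℤ, ∀ x ∈ (N : Set G), (α ^ z) x ∈ (N : Set G) := by
    intro z x hx
    rcases le_or_gt 0 z with h | h
    · have h1 := hfwd z.toNat x hx
      rwa [show ((z.toNat : ℕ) : ℤ) = z by omega] at h1
    · have h1 := hbwd (-z).toNat x hx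
      rwa [show (-(((-z).toNat : ℕ) : ℤ)) = z by omega] at h1
  -- compact open subgroup between N and U
  obtain ⟨W, hWc, hWo, hNW, hWU⟩ := exists_compactOpen_between hU N hNc hNU
  -- tidy above stage
  obtain ⟨n₀, hTA⟩ := exists_tidyAbove hc hWc hWo
  refine ⟨Vm α W n₀, Vm_isCompact hc hWc n₀, Vm_isOpen hc hWc hWo n₀, ?_, ?_, ?_⟩
  · -- Tidy
    have habove : TidyAbove α ((Vm α W n₀ : Subgroup G) : Set G) := hTA n₀ le_rfl
    have hNV : (N : Set G) ⊆ ((Vm α W n₀ : Subgroup G) : Set G) := by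
      intro x hx
      exact mem_Vm_set.2 fun k _ =>
        SetLike.mem_coe.1 (hNW (hNstable (-(k : ℤ)) x hx))
    have hnubV : ((nub α : Subgroup G) : Set G) ⊆ ((Vm α W n₀ : Subgroup G) : Set G) :=
      hnub.trans hNV
    refine ⟨habove, ?_, ?_⟩
    · exact plusPlus_closed hc hfam (Vm_isCompact hc hWc n₀) (Vm_isOpen hc hWc hWo n₀)
        hnubV habove
    · have hc' : ∀ z : ℤ, Continuous ⇑(α⁻¹ ^ z) := hc_inv hc
      have hfam' : (tidyFam α⁻¹).Nonempty := by rw [tidyFam_inv]; exact hfam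
      have hnubV' : ((nub α⁻¹ : Subgroup G) : Set G) ⊆ ((Vm α W n₀ : Subgroup G) : Set G) := by
        rw [nub_inv]
        exact hnubV
      have habove' : TidyAbove α⁻¹ ((Vm α W n₀ : Subgroup G) : Set G) := tidyAbove_inv habove
      exact plusPlus_closed hc' hfam' (Vm_isCompact hc hWc n₀) (Vm_isOpen hc hWc hWo n₀)
        hnubV' habove'
  · intro x hx
    exact mem_Vm_set.2 fun k _ =>
      SetLike.mem_coe.1 (hNW (hNstable (-(k : ℤ)) x hx))
  · exact Vm_subset.trans hWU
end

section
/- Let G be a compact, Hausdorff, totally disconnected topological group, α a topological group automorphism of G, and N a closed normal α-stable subgroup of G. Let q : G → G/N be the quotient map and let ᾱ be the automorphism of G/N induced by α. Then nub(ᾱ) = q(nub(α)). -/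
open Pointwise Filter Topology

variable {G : Type*}

section Aux

variable {H : Type*} [Group H] [TopologicalSpace H] [IsTopologicalGroup H]

lemma coe_mulAut_mul_image (a b : MulAut H) (s : Set H) :
    ⇑(a * b) '' s = ⇑a '' (⇑b '' s) := by
  rw [← Set.image_comp]; rfl

lemma pow_cont (φ : MulAut H) (h : Continuous ⇑φ) : ∀ k : ℕ, Continuous ⇑(φ ^ k) := by
  intro k
  induction k with
  | zero =>
    have : ⇑(φ ^ 0) = id := by ext x; simp
    rw [this]; exact continuous_id
  | succ n ih =>
    have : ⇑(φ ^ (n + 1)) = ⇑(φ ^ n) ∘ ⇑φ := by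
      ext x; simp [pow_succ]
    rw [this]; exact ih.comp h

lemma plusPart_eq_coe (φ : MulAut H) (V : Subgroup H) :
    plusPart φ (V : Set H) = ↑(plusSub φ V) := by
  rw [plusSub, Subgroup.coe_iInf]; rfl

/-- Key Baire-category lemma: in a compact group, if `V₊₊` is closed then `V₊` is `φ`-stable. -/
lemma plusPart_stable [CompactSpace H] [T2Space H]
    (φ : MulAut H) (hc : Continuous ⇑φ)
    (V : Subgroup H) (hVcl : IsClosed (V : Set H))
    (hcl : IsClosed (⋃ k : ℕ, ⇑(φ ^ k) '' plusPart φ (V : Set H))) :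
    ⇑φ '' plusPart φ (V : Set H) = plusPart φ (V : Set H) := by
  classical
  set P : Set H := plusPart φ (V : Set H) with hP
  have hpow : ∀ k : ℕ, Continuous ⇑(φ ^ k) := pow_cont φ hc
  have hVk : ∀ k : ℕ, IsCompact (⇑(φ ^ k) '' (V : Set H)) :=
    fun k => hVcl.isCompact.image (hpow k)
  have hPcl : IsClosed P := isClosed_iInter fun k => (hVk k).isClosed
  have hPcomp : IsCompact P := hPcl.isCompact
  have hPsub : P = ↑(plusSub φ V) := plusPart_eq_coe φ V
  have hPsubset : P ⊆ ⇑φ '' P := by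
    intro x hx
    have hx1 : x ∈ ⇑(φ ^ 1) '' (V : Set H) := Set.mem_iInter.mp hx 1
    obtain ⟨y, hyV, hyx⟩ := hx1
    have hyx' : φ y = x := by simpa using hyx
    refine ⟨y, ?_, hyx'⟩
    refine Set.mem_iInter.mpr fun k => ?_
    have hk1 : x ∈ ⇑(φ ^ (k + 1)) '' (V : Set H) := Set.mem_iInter.mp hx (k + 1)
    obtain ⟨z, hzV, hzx⟩ := hk1
    have h1 : φ ((φ ^ k) z) = x := by
      rw [← hzx, pow_succ']; rfl
    have h2 : (φ ^ k) z = y := φ.injective (by rw [h1, hyx'])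
    exact ⟨z, hzV, h2⟩
  have hmono : ∀ k : ℕ, ⇑(φ ^ k) '' P ⊆ ⇑(φ ^ (k + 1)) '' P := by
    intro k
    have h : ⇑(φ ^ (k + 1)) '' P = ⇑(φ ^ k) '' (⇑φ '' P) := by
      rw [pow_succ, coe_mulAut_mul_image]
    rw [h]
    exact Set.image_mono hPsubset
  have hmono' : Monotone (fun k : ℕ => ⇑(φ ^ k) '' P) := monotone_nat_of_le_succ hmono
  set K : Set H := ⋃ k : ℕ, ⇑(φ ^ k) '' P with hK
  have hKP : ∀ k, ⇑(φ ^ k) '' P ⊆ K := by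
    intro k; rw [hK]; exact Set.subset_iUnion (fun k : ℕ => ⇑(φ ^ k) '' P) k
  have honeP : (1 : H) ∈ P := by rw [hPsub]; exact (plusSub φ V).one_mem
  have honeK : (1 : H) ∈ K := hKP 0 ⟨1, honeP, map_one _⟩
  have hPk_sub : ∀ k : ℕ, ⇑(φ ^ k) '' P = ↑(mapAut (φ ^ k) (plusSub φ V)) := by
    intro k; rw [hP, plusPart_eq_coe]; rfl
  have hKmul : ∀ x ∈ K, ∀ y ∈ K, x * y ∈ K := by
    intro x hx y hy
    obtain ⟨j, hj⟩ := Set.mem_iUnion.mp hx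
    obtain ⟨l, hl⟩ := Set.mem_iUnion.mp hy
    have hj' : x ∈ ⇑(φ ^ max j l) '' P := hmono' (le_max_left j l) hj
    have hl' : y ∈ ⇑(φ ^ max j l) '' P := hmono' (le_max_right j l) hl
    refine hKP (max j l) ?_
    rw [hPk_sub] at hj' hl' ⊢
    exact (mapAut _ _).mul_mem hj' hl'
  have hKinv : ∀ x ∈ K, x⁻¹ ∈ K := by
    intro x hx
    obtain ⟨j, hj⟩ := Set.mem_iUnion.mp hx
    refine hKP j ?_
    rw [hPk_sub] at hj ⊢
    exact (mapAut _ _).inv_mem hj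
  have hKcomp : IsCompact K := hcl.isCompact
  haveI : CompactSpace K := isCompact_iff_compactSpace.mp hKcomp
  haveI : Nonempty K := ⟨⟨1, honeK⟩⟩
  have hclosedk : ∀ k : ℕ, IsClosed (⇑(φ ^ k) '' P) :=
    fun k => (hPcomp.image (hpow k)).isClosed
  have hbaire : ∃ k : ℕ,
      (interior ((fun z : K => (z : H)) ⁻¹' (⇑(φ ^ k) '' P))).Nonempty := by
    apply nonempty_interior_of_iUnion_of_closed
    · exact fun k => (hclosedk k).preimage continuous_subtype_val
    · ext z
      simp only [Set.mem_iUnion, Set.mem_univ, iff_true, Set.mem_preimage]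
      exact Set.mem_iUnion.mp z.2
  obtain ⟨k₀, z₀, hz₀⟩ := hbaire
  rw [mem_interior] at hz₀
  obtain ⟨t, hts, htop, hzt⟩ := hz₀
  obtain ⟨U, hUopen, hUt⟩ := isOpen_induced_iff.mp htop
  have hUK : ∀ w : H, w ∈ K → w ∈ U → w ∈ ⇑(φ ^ k₀) '' P := by
    intro w hwK hwU
    have hmem : (⟨w, hwK⟩ : K) ∈ t := by rw [← hUt]; exact hwU
    exact hts hmem
  set x : H := (z₀ : H) with hx
  have hxU : x ∈ U := by
    rw [← hUt] at hzt; exact hzt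
  have hxP : x ∈ ⇑(φ ^ k₀) '' P := hts hzt
  have hxK : x ∈ K := z₀.2
  have hlev : ∀ z : K, ∃ j, (z : H) ∈ ⇑(φ ^ j) '' P := fun z => Set.mem_iUnion.mp z.2
  choose lev hlev' using hlev
  set O : K → Set H := fun z => (fun w => x * (z : H)⁻¹ * w) ⁻¹' U with hO
  have hOopen : ∀ z, IsOpen (O z) :=
    fun z => hUopen.preimage (continuous_const.mul continuous_id)
  have hOmem : ∀ z : K, (z : H) ∈ O z := by
    intro z
    simp only [hO, Set.mem_preimage]
    simpa [mul_assoc] using hxU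
  obtain ⟨s, hs⟩ := hKcomp.elim_finite_subcover O hOopen
    (fun w hw => Set.mem_iUnion.mpr ⟨⟨w, hw⟩, hOmem _⟩)
  set M : ℕ := s.sup (fun z => max (lev z) k₀) with hM
  have hcover : K ⊆ ⇑(φ ^ M) '' P := by
    intro w hw
    obtain ⟨z, hzs, hwO⟩ := Set.mem_iUnion₂.mp (hs hw)
    have hu_in_U : x * (z : H)⁻¹ * w ∈ U := hwO
    have hu_in_K : x * (z : H)⁻¹ * w ∈ K :=
      hKmul _ (hKmul _ hxK _ (hKinv _ z.2)) _ hw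
    have hu : x * (z : H)⁻¹ * w ∈ ⇑(φ ^ k₀) '' P := hUK _ hu_in_K hu_in_U
    have hwdecomp : w = (z : H) * x⁻¹ * (x * (z : H)⁻¹ * w) := by group
    have hle1 : lev z ≤ M := by
      rw [hM]; exact le_trans (le_max_left _ k₀) (Finset.le_sup (f := fun z => max (lev z) k₀) hzs)
    have hle2 : k₀ ≤ M := by
      rw [hM]; exact le_trans (le_max_right (lev z) k₀) (Finset.le_sup (f := fun z => max (lev z) k₀) hzs)
    have h1 : (z : H) ∈ ⇑(φ ^ M) '' P := hmono' hle1 (hlev' z)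
    have h2 : x ∈ ⇑(φ ^ M) '' P := hmono' hle2 hxP
    have h3 : x * (z : H)⁻¹ * w ∈ ⇑(φ ^ M) '' P := hmono' hle2 hu
    rw [hPk_sub] at h1 h2 h3 ⊢
    rw [hwdecomp]
    exact mul_mem (mul_mem h1 (inv_mem h2)) h3
  have hstep : ⇑(φ ^ (M + 1)) '' P = ⇑(φ ^ M) '' P :=
    le_antisymm ((hKP (M + 1)).trans hcover) (hmono M)
  have hkey : ⇑(φ ^ M) '' (⇑φ '' P) = ⇑(φ ^ M) '' P := by
    rw [← coe_mulAut_mul_image, ← pow_succ, hstep]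
  exact Set.image_injective.mpr (φ ^ M).injective hkey

lemma minusPart_eq (φ : MulAut H) (V : Set H) : minusPart φ V = plusPart φ⁻¹ V := rfl

lemma tidy_stable [CompactSpace H] [T2Space H]
    (φ : MulAut H) (hc : Continuous ⇑φ) (hc' : Continuous ⇑(φ⁻¹))
    (V : Subgroup H) (hVcl : IsClosed (V : Set H)) (ht : Tidy φ (V : Set H)) :
    ⇑φ '' (V : Set H) = (V : Set H) := by
  have hplus : ⇑φ '' plusPart φ (V : Set H) = plusPart φ (V : Set H) :=
    plusPart_stable φ hc V hVcl ht.2.1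
  have hminus' : ⇑φ⁻¹ '' plusPart φ⁻¹ (V : Set H) = plusPart φ⁻¹ (V : Set H) :=
    plusPart_stable φ⁻¹ hc' V hVcl ht.2.2
  have hminus : ⇑φ '' minusPart φ (V : Set H) = minusPart φ (V : Set H) := by
    rw [minusPart_eq]
    conv_lhs => rw [← hminus']
    rw [Set.image_image]
    simp [MulAut.apply_inv_self]
  calc ⇑φ '' (V : Set H)
      = ⇑φ '' (plusPart φ (V : Set H) * minusPart φ (V : Set H)) := by rw [← ht.1]
    _ = ⇑φ '' plusPart φ (V : Set H) * ⇑φ '' minusPart φ (V : Set H) := Set.image_mul φ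
    _ = plusPart φ (V : Set H) * minusPart φ (V : Set H) := by rw [hplus, hminus]
    _ = (V : Set H) := (ht.1).symm

lemma stable_tidy (φ : MulAut H) (V : Subgroup H) (hVo : IsOpen (V : Set H))
    (hst : ⇑φ '' (V : Set H) = (V : Set H)) : Tidy φ (V : Set H) := by
  have hstinv : ⇑φ⁻¹ '' (V : Set H) = (V : Set H) := by
    conv_lhs => rw [← hst]
    rw [Set.image_image]
    simp [MulAut.inv_apply_self]
  have hpowst : ∀ (ψ : MulAut H), ⇑ψ '' (V : Set H) = (V : Set H) →
      ∀ k : ℕ, ⇑(ψ ^ k) '' (V : Set H) = (V : Set H) := by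
    intro ψ hψ k
    induction k with
    | zero =>
      have h0 : ⇑(ψ ^ 0) = id := by ext x; simp
      rw [h0, Set.image_id]
    | succ n ih =>
      rw [pow_succ, coe_mulAut_mul_image, hψ, ih]
  have hplus : plusPart φ (V : Set H) = (V : Set H) := by
    rw [plusPart]
    have : ∀ k : ℕ, ⇑(φ ^ k) '' (V : Set H) = (V : Set H) := hpowst φ hst
    simp only [this, Set.iInter_const]
  have hminus : minusPart φ (V : Set H) = (V : Set H) := by
    rw [minusPart]
    have : ∀ k : ℕ, ⇑(φ⁻¹ ^ k) '' (V : Set H) = (V : Set H) := hpowst φ⁻¹ hstinv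
    simp only [this, Set.iInter_const]
  have hVV : (V : Set H) * (V : Set H) = (V : Set H) := by
    apply Set.Subset.antisymm
    · rintro _ ⟨a, ha, b, hb, rfl⟩
      exact V.mul_mem ha hb
    · exact fun x hx => ⟨x, hx, 1, V.one_mem, mul_one x⟩
  have hVclosed : IsClosed (V : Set H) := Subgroup.isClosed_of_isOpen V hVo
  refine ⟨?_, ?_, ?_⟩
  · rw [TidyAbove, hplus, hminus, hVV]
  · rw [hplus]
    have : (⋃ k : ℕ, ⇑(φ ^ k) '' (V : Set H)) = (V : Set H) := by
      simp only [hpowst φ hst, Set.iUnion_const]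
    rw [this]; exact hVclosed
  · rw [hminus]
    have : (⋃ k : ℕ, ⇑(φ⁻¹ ^ k) '' (V : Set H)) = (V : Set H) := by
      simp only [hpowst φ⁻¹ hstinv, Set.iUnion_const]
    rw [this]; exact hVclosed

lemma mem_nub (φ : MulAut H) (x : H) :
    x ∈ nub φ ↔ ∀ V : Subgroup H, IsCompact (V : Set H) → IsOpen (V : Set H) →
      Tidy φ (V : Set H) → x ∈ V := by
  simp only [nub, Subgroup.mem_iInf, Set.mem_setOf_eq, and_imp]

end Aux

section QuotAux

variable {H : Type*} [Group H]

lemma comm_pow {Q : Type*} [Group Q] (q : H →* Q) (φ : MulAut H) (ψ : MulAut Q)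
    (h : ∀ x, ψ (q x) = q (φ x)) : ∀ k : ℕ, ∀ x, (ψ ^ k) (q x) = q ((φ ^ k) x) := by
  intro k
  induction k with
  | zero => intro x; simp
  | succ n ih =>
    intro x
    have e1 : (ψ ^ (n + 1)) (q x) = (ψ ^ n) (ψ (q x)) := by rw [pow_succ]; rfl
    have e2 : (φ ^ (n + 1)) x = (φ ^ n) (φ x) := by rw [pow_succ]; rfl
    rw [e1, e2, h, ih]

lemma comm_inv {Q : Type*} [Group Q] (q : H →* Q) (φ : MulAut H) (ψ : MulAut Q)
    (h : ∀ x, ψ (q x) = q (φ x)) : ∀ x, ψ⁻¹ (q x) = q (φ⁻¹ x) := by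
  intro x
  apply ψ.injective
  rw [MulAut.apply_inv_self, h, MulAut.apply_inv_self]

lemma image_preimage_comm {Q : Type*} [Group Q] (q : H →* Q)
    (φ : MulAut H) (ψ : MulAut Q) (h : ∀ x, ψ (q x) = q (φ x)) (A : Set Q) :
    ⇑φ '' (⇑q ⁻¹' A) = ⇑q ⁻¹' (⇑ψ '' A) := by
  ext x
  constructor
  · rintro ⟨v, hv, rfl⟩
    exact ⟨q v, hv, h v⟩
  · rintro ⟨a, ha, hax⟩
    refine ⟨φ⁻¹ x, ?_, MulAut.apply_inv_self _ _ _⟩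
    have h1 : ψ (q (φ⁻¹ x)) = q x := by rw [h, MulAut.apply_inv_self]
    have h2 : q (φ⁻¹ x) = a := ψ.injective (by rw [h1, ← hax])
    rw [Set.mem_preimage, h2]; exact ha

lemma preimage_mul_set {Q : Type*} [Group Q] (q : H →* Q) (hq : Function.Surjective ⇑q)
    (A B : Set Q) : ⇑q ⁻¹' (A * B) = (⇑q ⁻¹' A) * (⇑q ⁻¹' B) := by
  ext x
  constructor
  · intro hx
    obtain ⟨a, ha, b, hb, hab⟩ := hx
    obtain ⟨u, hu⟩ := hq a
    refine ⟨u, by rw [Set.mem_preimage, hu]; exact ha, u⁻¹ * x, ?_, by group⟩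
    have : q (u⁻¹ * x) = b := by
      rw [map_mul, map_inv, hu, ← hab]
      group
    rw [Set.mem_preimage, this]; exact hb
  · rintro ⟨u, hu, v, hv, rfl⟩
    rw [Set.mem_preimage, map_mul]
    exact Set.mul_mem_mul hu hv

end QuotAux

/-- For a compact `G` and closed normal `α`-stable `N`, the nub of the
induced automorphism of `G ⧸ N` is the image of `nub α`. -/
theorem nub_quotient_eq_image
    [Group G] [TopologicalSpace G] [IsTopologicalGroup G] [T2Space G]
    [TotallyDisconnectedSpace G] [CompactSpace G]
    (α : MulAut G) (hαc : Continuous ⇑α) (hαc' : Continuous ⇑(α⁻¹))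
    (N : Subgroup G) [N.Normal] (hNcl : IsClosed (N : Set G))
    (hNs : ⇑α '' (N : Set G) = (N : Set G))
    (β : MulAut (G ⧸ N)) (hβc : Continuous ⇑β) (hβc' : Continuous ⇑(β⁻¹))
    (hcomm : ∀ x : G, β ((x : G ⧸ N)) = ((α x : G) : G ⧸ N)) :
    (nub β : Set (G ⧸ N)) = (fun x : G => (x : G ⧸ N)) '' (nub α : Set G) := by
  classical
  set q : G →* G ⧸ N := QuotientGroup.mk' N with hqdef
  have hqsurj : Function.Surjective ⇑q := QuotientGroup.mk'_surjective N
  have hqcont : Continuous ⇑q := continuous_quot_mk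
  have hqopen : IsOpenMap ⇑q := QuotientGroup.isOpenMap_coe
  have hcommq : ∀ x, β (q x) = q (α x) := hcomm
  have hcomminv : ∀ x, β⁻¹ (q x) = q (α⁻¹ x) := comm_inv q α β hcommq
  apply Set.Subset.antisymm
  · -- nub β ⊆ q '' nub α
    intro y hy
    rw [SetLike.mem_coe, mem_nub] at hy
    obtain ⟨y₀, hy₀⟩ := hqsurj y
    have hfibcl : IsClosed (⇑q ⁻¹' {y}) := by
      have hfib : ⇑q ⁻¹' {y} = (fun x => y₀⁻¹ * x) ⁻¹' (N : Set G) := by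
        ext x
        simp only [Set.mem_preimage, Set.mem_singleton_iff, SetLike.mem_coe]
        rw [← hy₀]
        constructor
        · intro h
          exact QuotientGroup.eq.mp h.symm
        · intro h
          exact (QuotientGroup.eq.mpr h).symm
      rw [hfib]
      exact hNcl.preimage (continuous_const.mul continuous_id)
    have htop : IsCompact ((⊤ : Subgroup G) : Set G) ∧ IsOpen ((⊤ : Subgroup G) : Set G) ∧
        ⇑α '' ((⊤ : Subgroup G) : Set G) = ((⊤ : Subgroup G) : Set G) := by
      refine ⟨by simpa using isCompact_univ, by simpa using isOpen_univ, ?_⟩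
      simp only [Subgroup.coe_top, Set.image_univ]
      exact α.surjective.range_eq
    haveI hne : Nonempty {V : Subgroup G // IsCompact (V : Set G) ∧ IsOpen (V : Set G) ∧
        ⇑α '' (V : Set G) = (V : Set G)} := ⟨⟨⊤, htop⟩⟩
    set C : {V : Subgroup G // IsCompact (V : Set G) ∧ IsOpen (V : Set G) ∧
        ⇑α '' (V : Set G) = (V : Set G)} → Set G :=
      fun V => (V.1 : Set G) ∩ ⇑q ⁻¹' {y} with hC
    have hCne : ∀ V, (C V).Nonempty := by
      intro V
      have hstabW : ⇑β '' (⇑q '' (V.1 : Set G)) = ⇑q '' (V.1 : Set G) := by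
        rw [Set.image_image]
        have h1 : (fun x => β (q x)) = fun x => q (α x) := funext hcommq
        rw [h1, ← Set.image_image, V.2.2.2]
      have hWmap : ((V.1.map q : Subgroup (G ⧸ N)) : Set (G ⧸ N)) = ⇑q '' (V.1 : Set G) :=
        Subgroup.coe_map q V.1
      have hWc : IsCompact ((V.1.map q : Subgroup (G ⧸ N)) : Set (G ⧸ N)) := by
        rw [hWmap]; exact V.2.1.image hqcont
      have hWo : IsOpen ((V.1.map q : Subgroup (G ⧸ N)) : Set (G ⧸ N)) := by
        rw [hWmap]; exact hqopen _ V.2.2.1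
      have hWt : Tidy β ((V.1.map q : Subgroup (G ⧸ N)) : Set (G ⧸ N)) := by
        apply stable_tidy β _ hWo
        rw [hWmap]; exact hstabW
      have hyW : y ∈ V.1.map q := hy _ hWc hWo hWt
      obtain ⟨x, hxV, hxy⟩ := Subgroup.mem_map.mp hyW
      exact ⟨x, hxV, by rw [Set.mem_preimage, hxy]; exact rfl⟩
    have hCcomp : ∀ V, IsCompact (C V) := fun V => V.2.1.inter_right hfibcl
    have hCcl : ∀ V, IsClosed (C V) := fun V => (V.2.1.isClosed).inter hfibcl
    have hdir : Directed (· ⊇ ·) C := by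
      intro V W
      refine ⟨⟨V.1 ⊓ W.1, ?_, ?_, ?_⟩, ?_, ?_⟩
      · rw [Subgroup.coe_inf]
        exact V.2.1.inter_right W.2.1.isClosed
      · rw [Subgroup.coe_inf]
        exact V.2.2.1.inter W.2.2.1
      · rw [Subgroup.coe_inf, Set.image_inter α.injective, V.2.2.2, W.2.2.2]
      · exact Set.inter_subset_inter_left _ (by rw [Subgroup.coe_inf]; exact Set.inter_subset_left)
      · exact Set.inter_subset_inter_left _ (by rw [Subgroup.coe_inf]; exact Set.inter_subset_right)
    obtain ⟨x, hx⟩ :=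
      IsCompact.nonempty_iInter_of_directed_nonempty_isCompact_isClosed C hdir hCne hCcomp hCcl
    rw [Set.mem_iInter] at hx
    refine ⟨x, ?_, ?_⟩
    · rw [SetLike.mem_coe, mem_nub]
      intro V hVc hVo hVt
      have hstable : ⇑α '' (V : Set G) = (V : Set G) :=
        tidy_stable α hαc hαc' V hVc.isClosed hVt
      exact (hx ⟨V, hVc, hVo, hstable⟩).1
    · have h2 := (hx ⟨⊤, htop⟩).2
      rw [Set.mem_preimage, Set.mem_singleton_iff] at h2
      exact h2
  · -- q '' nub α ⊆ nub β
    rintro _ ⟨x, hx, rfl⟩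
    rw [SetLike.mem_coe] at hx
    show q x ∈ (nub β : Set (G ⧸ N))
    rw [SetLike.mem_coe, mem_nub]
    intro W hWc hWo hWt
    have hWcl : IsClosed (W : Set (G ⧸ N)) := Subgroup.isClosed_of_isOpen W hWo
    set V : Subgroup G := W.comap q with hVdef
    have hVcoe : (V : Set G) = ⇑q ⁻¹' (W : Set (G ⧸ N)) := rfl
    have hVo : IsOpen (V : Set G) := by rw [hVcoe]; exact hWo.preimage hqcont
    have hVc : IsCompact (V : Set G) := by
      rw [hVcoe]; exact (hWcl.preimage hqcont).isCompact
    have hplus : plusPart α (V : Set G) = ⇑q ⁻¹' plusPart β (W : Set (G ⧸ N)) := by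
      simp only [plusPart, hVcoe]
      rw [Set.preimage_iInter]
      exact Set.iInter_congr fun k =>
        image_preimage_comm q (α ^ k) (β ^ k) (comm_pow q α β hcommq k) _
    have hminus : minusPart α (V : Set G) = ⇑q ⁻¹' minusPart β (W : Set (G ⧸ N)) := by
      simp only [minusPart, hVcoe]
      rw [Set.preimage_iInter]
      exact Set.iInter_congr fun k =>
        image_preimage_comm q (α⁻¹ ^ k) (β⁻¹ ^ k) (comm_pow q α⁻¹ β⁻¹ hcomminv k) _
    have htidy : Tidy α (V : Set G) := by
      refine ⟨?_, ?_, ?_⟩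
      · show (V : Set G) = plusPart α (V : Set G) * minusPart α (V : Set G)
        rw [hplus, hminus, ← preimage_mul_set q hqsurj, hVcoe, ← hWt.1]
      · rw [hplus]
        have h : (⋃ k : ℕ, ⇑(α ^ k) '' (⇑q ⁻¹' plusPart β (W : Set (G ⧸ N)))) =
            ⇑q ⁻¹' (⋃ k : ℕ, ⇑(β ^ k) '' plusPart β (W : Set (G ⧸ N))) := by
          rw [Set.preimage_iUnion]
          exact Set.iUnion_congr fun k =>
            image_preimage_comm q (α ^ k) (β ^ k) (comm_pow q α β hcommq k) _
        rw [h]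
        exact hWt.2.1.preimage hqcont
      · rw [hminus]
        have h : (⋃ k : ℕ, ⇑(α⁻¹ ^ k) '' (⇑q ⁻¹' minusPart β (W : Set (G ⧸ N)))) =
            ⇑q ⁻¹' (⋃ k : ℕ, ⇑(β⁻¹ ^ k) '' minusPart β (W : Set (G ⧸ N))) := by
          rw [Set.preimage_iUnion]
          exact Set.iUnion_congr fun k =>
            image_preimage_comm q (α⁻¹ ^ k) (β⁻¹ ^ k) (comm_pow q α⁻¹ β⁻¹ hcomminv k) _
        rw [h]
        exact hWt.2.2.preimage hqcont
    have hxV : x ∈ V := (mem_nub α x).mp hx V hVc hVo htidy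
    exact Subgroup.mem_comap.mp hxV
end

section
/- Let G be a compact, Hausdorff, totally disconnected topological group and α a topological group automorphism of G such that the pair (G,α) has finite depth, i.e. there is an open subgroup V of G with ⋂_{k∈ℤ} α^k(V) = {1}. Then nub(α) is an open subgroup of G. -/
set_option linter.unusedSectionVars false
set_option linter.unusedVariables false
set_option maxHeartbeats 1000000


open Pointwise Filter Topology

variable {G : Type*}

namespace NubAux

section Basic
variable [Group G]

lemma mem_mapAut {β : MulAut G} {H : Subgroup G} {x : G} :
    x ∈ mapAut β H ↔ β⁻¹ x ∈ H := by
  constructor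
  · rintro ⟨y, hy, rfl⟩
    simpa using hy
  · intro h
    exact ⟨β⁻¹ x, h, by simp⟩

lemma coe_mapAut (β : MulAut G) (H : Subgroup G) :
    (mapAut β H : Set G) = ⇑β '' (H : Set G) := rfl

lemma coe_mapAut_eq_preimage (β : MulAut G) (H : Subgroup G) :
    (mapAut β H : Set G) = ⇑β⁻¹ ⁻¹' (H : Set G) :=
  Set.ext fun _ => mem_mapAut

lemma mapAut_mono (β : MulAut G) {H K : Subgroup G} (h : H ≤ K) :
    mapAut β H ≤ mapAut β K := fun x hx => mem_mapAut.mpr (h (mem_mapAut.mp hx))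

lemma mapAut_inf (β : MulAut G) (H K : Subgroup G) :
    mapAut β (H ⊓ K) = mapAut β H ⊓ mapAut β K := by
  ext x
  simp [mem_mapAut, Subgroup.mem_inf]

lemma mapAut_top (β : MulAut G) : mapAut β (⊤ : Subgroup G) = ⊤ := by
  ext x; simp [mem_mapAut]

lemma mapAut_mapAut_inv (β : MulAut G) (H : Subgroup G) :
    mapAut β (mapAut β⁻¹ H) = H := by
  ext x
  simp [mem_mapAut]

lemma mapAut_eq_map (β : MulAut G) (H : Subgroup G) :
    mapAut β H = Subgroup.map β.toMonoidHom H := by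
  ext x
  simp only [Subgroup.mem_map, MulEquiv.coe_toMonoidHom]
  exact ⟨fun ⟨y, hy, h⟩ => ⟨y, hy, h⟩, fun ⟨y, hy, h⟩ => ⟨y, hy, h⟩⟩

lemma relIndex_mapAut (β : MulAut G) (H K : Subgroup G) :
    (mapAut β H).relIndex (mapAut β K) = H.relIndex K := by
  have hinj : Function.Injective ⇑β.toMonoidHom := fun a b h => β.injective h
  rw [mapAut_eq_map, mapAut_eq_map,
    ← Subgroup.comap_map_eq_self_of_injective hinj H,
    Subgroup.relIndex_comap, Subgroup.comap_map_eq_self_of_injective hinj H]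

lemma ap_pow_add (β : MulAut G) (a b : ℕ) (x : G) :
    (β ^ a) ((β ^ b) x) = (β ^ (a + b)) x := by
  rw [pow_add, MulAut.mul_apply]

lemma pow_apply_invpow (β : MulAut G) {i n : ℕ} (h : i ≤ n) (x : G) :
    (β ^ i) ((β⁻¹ ^ n) x) = (β⁻¹ ^ (n - i)) x := by
  induction i generalizing n with
  | zero => simp
  | succ i ih =>
    obtain ⟨m, rfl⟩ : ∃ m, n = m + 1 := ⟨n - 1, by omega⟩
    have h1 : (β ^ (i + 1)) ((β⁻¹ ^ (m + 1)) x) = (β ^ i) (β ((β⁻¹ ^ (m + 1)) x)) := by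
      rw [pow_succ, MulAut.mul_apply]
    have h2 : β ((β⁻¹ ^ (m + 1)) x) = (β⁻¹ ^ m) x := by
      rw [pow_succ', MulAut.mul_apply]; simp
    have he : m + 1 - (i + 1) = m - i := by omega
    rw [h1, h2, ih (by omega), he]

lemma invpow_apply_pow (β : MulAut G) {i n : ℕ} (h : i ≤ n) (x : G) :
    (β⁻¹ ^ i) ((β ^ n) x) = (β ^ (n - i)) x := by
  have := pow_apply_invpow β⁻¹ h x
  rwa [inv_inv] at this

end Basic


section Chains
variable [Group G] (α : MulAut G) (V : Subgroup G)

/-- `Cc n = ⋂_{i=1..n} αⁱ(V)`. -/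
def Cc : ℕ → Subgroup G
  | 0 => ⊤
  | n + 1 => mapAut α (Cc n ⊓ V)

/-- `Bb k = ⋂_{i=0..k-1} α⁻ⁱ(V)`. -/
def Bb : ℕ → Subgroup G
  | 0 => ⊤
  | k + 1 => V ⊓ mapAut α⁻¹ (Bb k)

/-- `A = ⋂_{i≥1} αⁱ(V)`. -/
def Asub : Subgroup G := ⨅ n, Cc α V n

/-- `B = ⋂_{i≥0} α⁻ⁱ(V)`. -/
def Bsub : Subgroup G := ⨅ k, Bb α V k

lemma mem_Cc {x : G} : ∀ {n : ℕ}, x ∈ Cc α V n ↔ ∀ i < n, (α⁻¹ ^ (i + 1)) x ∈ V := by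
  intro n
  induction n generalizing x with
  | zero => simp [Cc]
  | succ n ih =>
    show x ∈ mapAut α (Cc α V n ⊓ V) ↔ _
    rw [mem_mapAut, Subgroup.mem_inf, ih]
    constructor
    · rintro ⟨h, h0⟩ i hi
      match i with
      | 0 => simpa using h0
      | j + 1 =>
        have := h j (by omega)
        rwa [show (α⁻¹ ^ (j + 1)) (α⁻¹ x) = (α⁻¹ ^ (j + 2)) x by
          rw [show α⁻¹ x = (α⁻¹ ^ 1) x by rw [pow_one], ap_pow_add]] at this
    · intro h
      refine ⟨fun i hi => ?_, by simpa using h 0 (by omega)⟩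
      have := h (i + 1) (by omega)
      rwa [show (α⁻¹ ^ (i + 2)) x = (α⁻¹ ^ (i + 1)) (α⁻¹ x) by
        rw [show α⁻¹ x = (α⁻¹ ^ 1) x by rw [pow_one], ap_pow_add]] at this

lemma mem_Bb {x : G} : ∀ {k : ℕ}, x ∈ Bb α V k ↔ ∀ i < k, (α ^ i) x ∈ V := by
  intro k
  induction k generalizing x with
  | zero => simp [Bb]
  | succ k ih =>
    show x ∈ V ⊓ mapAut α⁻¹ (Bb α V k) ↔ _
    rw [Subgroup.mem_inf, mem_mapAut, inv_inv, ih]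
    constructor
    · rintro ⟨h0, h⟩ i hi
      match i with
      | 0 => simpa using h0
      | j + 1 =>
        have := h j (by omega)
        rwa [show (α ^ j) (α x) = (α ^ (j + 1)) x by
          rw [show α x = (α ^ 1) x by rw [pow_one], ap_pow_add]] at this
    · intro h
      refine ⟨by simpa using h 0 (by omega), fun i hi => ?_⟩
      have := h (i + 1) (by omega)
      rwa [show (α ^ (i + 1)) x = (α ^ i) (α x) by
        rw [show α x = (α ^ 1) x by rw [pow_one], ap_pow_add]] at this

lemma mem_Asub {x : G} : x ∈ Asub α V ↔ ∀ i : ℕ, (α⁻¹ ^ (i + 1)) x ∈ V := by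
  rw [Asub, Subgroup.mem_iInf]
  constructor
  · intro h i
    exact (mem_Cc α V).mp (h (i + 1)) i (by omega)
  · intro h n
    exact (mem_Cc α V).mpr fun i _ => h i

lemma mem_Bsub {x : G} : x ∈ Bsub α V ↔ ∀ i : ℕ, (α ^ i) x ∈ V := by
  rw [Bsub, Subgroup.mem_iInf]
  constructor
  · intro h i
    exact (mem_Bb α V).mp (h (i + 1)) i (by omega)
  · intro h k
    exact (mem_Bb α V).mpr fun i _ => h i

lemma Cc_anti : Antitone (Cc α V) := by
  refine antitone_nat_of_succ_le fun n => ?_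
  induction n with
  | zero => exact le_top
  | succ n ih => exact mapAut_mono α (inf_le_inf_right V ih)

lemma Bb_anti : Antitone (Bb α V) := by
  refine antitone_nat_of_succ_le fun k => ?_
  induction k with
  | zero => exact le_top
  | succ k ih => exact inf_le_inf_left V (mapAut_mono α⁻¹ ih)

lemma Bb_one : Bb α V 1 = V := by
  show V ⊓ mapAut α⁻¹ ⊤ = V
  rw [mapAut_top, inf_top_eq]

lemma Bb_le_V {k : ℕ} : Bb α V (k + 1) ≤ V := inf_le_left

lemma Cc_succ_le_mapAut_V (n : ℕ) : Cc α V (n + 1) ≤ mapAut α V :=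
  mapAut_mono α inf_le_right

end Chains


section Topo
variable [Group G] [TopologicalSpace G] [IsTopologicalGroup G]

lemma contPow {β : MulAut G} (hβ : Continuous ⇑β) (n : ℕ) : Continuous ⇑(β ^ n) := by
  induction n with
  | zero =>
    have : ⇑(β ^ 0 : MulAut G) = id := by funext x; simp
    rw [this]; exact continuous_id
  | succ n ih =>
    have : ⇑(β ^ (n + 1) : MulAut G) = ⇑(β ^ n) ∘ ⇑β := by
      funext x; rw [pow_succ, MulAut.mul_apply]; rfl
    rw [this]; exact ih.comp hβ

lemma contPowInv {β : MulAut G} (hβ' : Continuous ⇑β⁻¹) (n : ℕ) :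
    Continuous ⇑((β ^ n)⁻¹) := by
  rw [← inv_pow]; exact contPow hβ' n

lemma isOpen_mapAut {β : MulAut G} (hβ' : Continuous ⇑β⁻¹) {H : Subgroup G}
    (h : IsOpen (H : Set G)) : IsOpen (mapAut β H : Set G) := by
  rw [coe_mapAut_eq_preimage]; exact h.preimage hβ'

lemma isClosed_mapAut {β : MulAut G} (hβ' : Continuous ⇑β⁻¹) {H : Subgroup G}
    (h : IsClosed (H : Set G)) : IsClosed (mapAut β H : Set G) := by
  rw [coe_mapAut_eq_preimage]; exact h.preimage hβ'

variable (α : MulAut G) (V : Subgroup G)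

lemma isOpen_Cc (hαc' : Continuous ⇑α⁻¹) (hVo : IsOpen (V : Set G)) (n : ℕ) :
    IsOpen (Cc α V n : Set G) := by
  induction n with
  | zero => show IsOpen ((⊤ : Subgroup G) : Set G); rw [Subgroup.coe_top]; exact isOpen_univ
  | succ n ih =>
    show IsOpen (mapAut α (Cc α V n ⊓ V) : Set G)
    exact isOpen_mapAut hαc' (by rw [Subgroup.coe_inf]; exact ih.inter hVo)

lemma isOpen_Bb (hαc : Continuous ⇑α) (hVo : IsOpen (V : Set G)) (k : ℕ) :
    IsOpen (Bb α V k : Set G) := by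
  induction k with
  | zero => show IsOpen ((⊤ : Subgroup G) : Set G); rw [Subgroup.coe_top]; exact isOpen_univ
  | succ k ih =>
    show IsOpen (((V ⊓ mapAut α⁻¹ (Bb α V k)) : Subgroup G) : Set G)
    rw [Subgroup.coe_inf]
    exact hVo.inter (isOpen_mapAut (by rw [inv_inv]; exact hαc) ih)

lemma isClosed_Cc (hαc' : Continuous ⇑α⁻¹) (hVc : IsClosed (V : Set G)) (n : ℕ) :
    IsClosed (Cc α V n : Set G) := by
  induction n with
  | zero => show IsClosed ((⊤ : Subgroup G) : Set G); rw [Subgroup.coe_top]; exact isClosed_univ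
  | succ n ih =>
    show IsClosed (mapAut α (Cc α V n ⊓ V) : Set G)
    exact isClosed_mapAut hαc' (by rw [Subgroup.coe_inf]; exact ih.inter hVc)

lemma isClosed_Bb (hαc : Continuous ⇑α) (hVc : IsClosed (V : Set G)) (k : ℕ) :
    IsClosed (Bb α V k : Set G) := by
  induction k with
  | zero => show IsClosed ((⊤ : Subgroup G) : Set G); rw [Subgroup.coe_top]; exact isClosed_univ
  | succ k ih =>
    show IsClosed (((V ⊓ mapAut α⁻¹ (Bb α V k)) : Subgroup G) : Set G)
    rw [Subgroup.coe_inf]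
    exact hVc.inter (isClosed_mapAut (by rw [inv_inv]; exact hαc) ih)

lemma isClosed_Asub (hαc' : Continuous ⇑α⁻¹) (hVc : IsClosed (V : Set G)) :
    IsClosed (Asub α V : Set G) := by
  rw [Asub, Subgroup.coe_iInf]
  exact isClosed_iInter fun n => isClosed_Cc α V hαc' hVc n

lemma isClosed_Bsub (hαc : Continuous ⇑α) (hVc : IsClosed (V : Set G)) :
    IsClosed (Bsub α V : Set G) := by
  rw [Bsub, Subgroup.coe_iInf]
  exact isClosed_iInter fun k => isClosed_Bb α V hαc hVc k

end Topo

section Index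
variable [Group G] [TopologicalSpace G] [IsTopologicalGroup G] [CompactSpace G]

lemma index_ne_zero_of_isOpen {H : Subgroup G} (h : IsOpen (H : Set G)) : H.index ≠ 0 := by
  haveI := H.quotient_finite_of_isOpen h
  exact Subgroup.index_ne_zero_of_finite

variable (α : MulAut G) (V : Subgroup G)

/-- `ee n = [Cₙ : Cₙ ∩ V]`. -/
noncomputable def ee (n : ℕ) : ℕ := V.relIndex (Cc α V n)

/-- `ff n k = [Cₙ : Cₙ ∩ Bₖ]`. -/
noncomputable def ff (n k : ℕ) : ℕ := (Bb α V k).relIndex (Cc α V n)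

lemma ff_ne_zero (hαc : Continuous ⇑α) (hαc' : Continuous ⇑α⁻¹) (hVo : IsOpen (V : Set G))
    (n k : ℕ) : ff α V n k ≠ 0 := by
  have h1 : (Bb α V k ⊓ Cc α V n).index ≠ 0 :=
    index_ne_zero_of_isOpen (by
      rw [Subgroup.coe_inf]
      exact (isOpen_Bb α V hαc hVo k).inter (isOpen_Cc α V hαc' hVo n))
  have h2 := Subgroup.relIndex_mul_index
    (inf_le_right : Bb α V k ⊓ Cc α V n ≤ Cc α V n)
  rw [Subgroup.inf_relIndex_right] at h2
  exact left_ne_zero_of_mul (h2.symm ▸ h1)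

lemma ee_eq_ff (n : ℕ) : ee α V n = ff α V n 1 := by
  rw [ee, ff, Bb_one]

lemma ff_succ (n k : ℕ) : ff α V n (k + 1) = ee α V n * ff α V (n + 1) k := by
  have hB1V : Bb α V (k + 1) ≤ V := Bb_le_V α V
  have t1 := Subgroup.relIndex_mul_relIndex (H := Bb α V (k + 1) ⊓ Cc α V n) (K := V ⊓ Cc α V n)
    (L := Cc α V n) (inf_le_inf_right _ hB1V) inf_le_right
  rw [Subgroup.inf_relIndex_right, Subgroup.inf_relIndex_right] at t1
  -- t1 : (Bb (k+1) ⊓ Cc n).relIndex (V ⊓ Cc n) * ee n = ff n (k+1)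
  have hX : (Bb α V (k + 1) ⊓ Cc α V n).relIndex (V ⊓ Cc α V n) = ff α V (n + 1) k := by
    have e1 : Bb α V (k + 1) ⊓ Cc α V n = Bb α V (k + 1) ⊓ (V ⊓ Cc α V n) := by
      rw [← inf_assoc, inf_eq_left.mpr hB1V]
    rw [e1, Subgroup.inf_relIndex_right,
      ← relIndex_mapAut α (Bb α V (k + 1)) (V ⊓ Cc α V n)]
    have e2 : mapAut α (V ⊓ Cc α V n) = Cc α V (n + 1) := by
      show _ = mapAut α (Cc α V n ⊓ V)
      rw [inf_comm]
    have e3 : mapAut α (Bb α V (k + 1)) = mapAut α V ⊓ Bb α V k := by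
      show mapAut α (V ⊓ mapAut α⁻¹ (Bb α V k)) = _
      rw [mapAut_inf, mapAut_mapAut_inv]
    rw [e2, e3, ← Subgroup.inf_relIndex_right]
    have e4 : mapAut α V ⊓ Bb α V k ⊓ Cc α V (n + 1) = Bb α V k ⊓ Cc α V (n + 1) := by
      rw [inf_assoc, inf_eq_right.mpr (le_trans inf_le_right (Cc_succ_le_mapAut_V α V n))]
    rw [e4, Subgroup.inf_relIndex_right]
    rfl
  rw [hX] at t1
  have hdef : ff α V n (k + 1) = (Bb α V (k + 1)).relIndex (Cc α V n) := rfl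
  rw [hdef, ← t1, mul_comm, ee]

lemma ee_anti (hαc : Continuous ⇑α) (hαc' : Continuous ⇑α⁻¹) (hVo : IsOpen (V : Set G)) : Antitone (ee α V) := by
  refine antitone_nat_of_succ_le fun n => ?_
  refine Subgroup.relIndex_le_of_le_right (Cc_anti α V (by omega : n ≤ n + 1)) ?_
  show ee α V n ≠ 0
  rw [ee_eq_ff]
  exact ff_ne_zero α V hαc hαc' hVo n 1

lemma exists_stab (hαc : Continuous ⇑α) (hαc' : Continuous ⇑α⁻¹) (hVo : IsOpen (V : Set G)) : ∃ r, ∀ n, r ≤ n → ee α V n = ee α V r := by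
  have hne : (Set.range (ee α V)).Nonempty := ⟨ee α V 0, 0, rfl⟩
  obtain ⟨r, hr⟩ := Nat.sInf_mem hne
  refine ⟨r, fun n hn => le_antisymm (ee_anti α V hαc hαc' hVo hn) ?_⟩
  rw [hr]
  exact Nat.sInf_le ⟨n, rfl⟩

lemma ff_eq_pow {r : ℕ} (hstab : ∀ n, r ≤ n → ee α V n = ee α V r) :
    ∀ k n, r ≤ n → ff α V n k = ee α V r ^ k := by
  intro k
  induction k with
  | zero =>
    intro n _
    show (Bb α V 0).relIndex (Cc α V n) = _
    show (⊤ : Subgroup G).relIndex (Cc α V n) = _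
    rw [Subgroup.relIndex_top_left, pow_zero]
  | succ k ih =>
    intro n hn
    rw [ff_succ α V, hstab n hn, ih (n + 1) (by omega), pow_succ']

end Index


section Count
variable [Group G]

lemma exists_factor {H K L : Subgroup G} (hHK : H ≤ K)
    (h0 : L.relIndex K ≠ 0) (heq : L.relIndex H = L.relIndex K) {x : G} (hx : x ∈ K) :
    ∃ y ∈ H, y⁻¹ * x ∈ L := by
  have hfinK : Finite (↥K ⧸ L.subgroupOf K) := by
    have : (L.subgroupOf K).index ≠ 0 := h0
    rw [Subgroup.index_eq_card] at this
    exact (Nat.card_ne_zero.mp this).2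
  set φ := Subgroup.quotientSubgroupOfEmbeddingOfLE L hHK with hφ
  have hcard : Nat.card (↥H ⧸ L.subgroupOf H) = Nat.card (↥K ⧸ L.subgroupOf K) := by
    rw [← Subgroup.index_eq_card, ← Subgroup.index_eq_card]
    exact heq
  have hbij : Function.Bijective ⇑φ :=
    (Nat.bijective_iff_injective_and_card ⇑φ).mpr ⟨φ.injective, hcard⟩
  obtain ⟨q, hq⟩ := hbij.2 (QuotientGroup.mk ⟨x, hx⟩)
  obtain ⟨y, rfl⟩ := QuotientGroup.mk_surjective q
  rw [hφ, Subgroup.quotientSubgroupOfEmbeddingOfLE_apply_mk] at hq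
  have hmem := QuotientGroup.eq.mp hq
  rw [Subgroup.mem_subgroupOf] at hmem
  refine ⟨(y : G), y.2, ?_⟩
  simpa using hmem

end Count

section Split
variable [Group G] [TopologicalSpace G] [IsTopologicalGroup G] [CompactSpace G] [T2Space G]
variable (α : MulAut G) (V : Subgroup G)

lemma Cc_subset_mul (hαc : Continuous ⇑α) (hαc' : Continuous ⇑α⁻¹)
    (hVo : IsOpen (V : Set G)) {r : ℕ} (hstab : ∀ n, r ≤ n → ee α V n = ee α V r) :
    (Cc α V r : Set G) ⊆ (Asub α V : Set G) * (Bsub α V : Set G) := by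
  have hVc : IsClosed (V : Set G) := V.isClosed_of_isOpen hVo
  intro x hx
  have step1 : ∀ N k : ℕ, ∃ y ∈ Cc α V (r + N), y⁻¹ * x ∈ Bb α V k := by
    intro N k
    refine exists_factor (Cc_anti α V (by omega : r ≤ r + N)) ?_ ?_ hx
    · exact ff_ne_zero α V hαc hαc' hVo r k
    · show ff α V (r + N) k = ff α V r k
      rw [ff_eq_pow α V hstab k (r + N) (by omega), ff_eq_pow α V hstab k r (le_refl r)]
  have step2 : ∀ k : ℕ, ∃ y ∈ Asub α V, y⁻¹ * x ∈ Bb α V k := by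
    intro k
    set E : ℕ → Set G := fun N => (Cc α V (r + N) : Set G) ∩ {y | y⁻¹ * x ∈ Bb α V k} with hE
    have hclosedE : ∀ N, IsClosed (E N) := fun N =>
      (isClosed_Cc α V hαc' hVc _).inter
        ((isClosed_Bb α V hαc hVc k).preimage (continuous_inv.mul continuous_const))
    have hnested : ∀ N, E (N + 1) ⊆ E N := fun N =>
      Set.inter_subset_inter_left _ (Cc_anti α V (by omega))
    have hne : ∀ N, (E N).Nonempty := by
      intro N
      obtain ⟨y, h1, h2⟩ := step1 N k
      exact ⟨y, h1, h2⟩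
    obtain ⟨y, hy⟩ := IsCompact.nonempty_iInter_of_sequence_nonempty_isCompact_isClosed E
      hnested hne (hclosedE 0).isCompact hclosedE
    simp only [Set.mem_iInter] at hy
    refine ⟨y, ?_, (hy 0).2⟩
    rw [Asub, Subgroup.mem_iInf]
    intro n
    exact Cc_anti α V (Nat.le_add_left n r) (hy n).1
  set F : ℕ → Set G := fun k => (Asub α V : Set G) ∩ {y | y⁻¹ * x ∈ Bb α V k} with hF
  have hclosedF : ∀ k, IsClosed (F k) := fun k =>
    (isClosed_Asub α V hαc' hVc).inter
      ((isClosed_Bb α V hαc hVc k).preimage (continuous_inv.mul continuous_const))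
  have hnestedF : ∀ k, F (k + 1) ⊆ F k := fun k =>
    Set.inter_subset_inter_right _ fun y hy => Bb_anti α V (by omega : k ≤ k + 1) hy
  have hneF : ∀ k, (F k).Nonempty := by
    intro k
    obtain ⟨y, h1, h2⟩ := step2 k
    exact ⟨y, h1, h2⟩
  obtain ⟨y, hy⟩ := IsCompact.nonempty_iInter_of_sequence_nonempty_isCompact_isClosed F
    hnestedF hneF (hclosedF 0).isCompact hclosedF
  simp only [Set.mem_iInter] at hy
  have hyB : y⁻¹ * x ∈ Bsub α V := by
    rw [Bsub, Subgroup.mem_iInf]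
    exact fun k => (hy k).2
  exact ⟨y, (hy 0).1, y⁻¹ * x, hyB, mul_inv_cancel_left y x⟩

end Split


section Stable
variable [Group G] [TopologicalSpace G] [IsTopologicalGroup G] [CompactSpace G] [T2Space G]

lemma coe_plusSub (β : MulAut G) (W : Subgroup G) :
    (plusSub β W : Set G) = plusPart β (W : Set G) := by
  rw [plusSub, Subgroup.coe_iInf]
  rfl

lemma mem_plusSub {β : MulAut G} {W : Subgroup G} {x : G} :
    x ∈ plusSub β W ↔ ∀ k : ℕ, (β⁻¹ ^ k) x ∈ W := by
  rw [plusSub, Subgroup.mem_iInf]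
  refine forall_congr' fun k => ?_
  rw [mem_mapAut, inv_pow]

lemma plus_le_mapAut (β : MulAut G) (W : Subgroup G) :
    plusSub β W ≤ mapAut β (plusSub β W) := by
  intro x hx
  rw [mem_mapAut, mem_plusSub]
  rw [mem_plusSub] at hx
  intro k
  have := hx (k + 1)
  rwa [show (β⁻¹ ^ (k + 1)) x = (β⁻¹ ^ k) (β⁻¹ x) by
    rw [show β⁻¹ x = (β⁻¹ ^ 1) x by rw [pow_one], ap_pow_add]] at this

lemma isClosed_plusSub (β : MulAut G) (hβ' : Continuous ⇑β⁻¹) (W : Subgroup G)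
    (hWc : IsCompact (W : Set G)) : IsClosed (plusSub β W : Set G) := by
  rw [plusSub, Subgroup.coe_iInf]
  exact isClosed_iInter fun k => isClosed_mapAut (contPowInv hβ' k) hWc.isClosed

lemma mapAut_plusSub_eq (β : MulAut G) (hβ : Continuous ⇑β) (hβ' : Continuous ⇑β⁻¹)
    (W : Subgroup G) (hWc : IsCompact (W : Set G))
    (hcl : IsClosed (⋃ k : ℕ, ⇑(β ^ k) '' plusPart β (W : Set G))) :
    mapAut β (plusSub β W) = plusSub β W := by
  set P := plusSub β W with hP
  set Q : ℕ → Subgroup G := fun k => mapAut (β ^ k) P with hQ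
  have mem_Q : ∀ (k : ℕ) (x : G), x ∈ Q k ↔ (β⁻¹ ^ k) x ∈ P := by
    intro k x
    rw [hQ]
    show x ∈ mapAut (β ^ k) P ↔ _
    rw [mem_mapAut, inv_pow]
  have hQmono : Monotone Q := by
    refine monotone_nat_of_le_succ fun k => ?_
    intro x hx
    rw [mem_Q] at hx ⊢
    rw [show (β⁻¹ ^ (k + 1)) x = β⁻¹ ((β⁻¹ ^ k) x) by rw [pow_succ', MulAut.mul_apply]]
    have := plus_le_mapAut β W hx
    rwa [mem_mapAut] at this
  have isClosed_Q : ∀ k, IsClosed (Q k : Set G) := fun k =>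
    isClosed_mapAut (contPowInv hβ' k) (isClosed_plusSub β hβ' W hWc)
  set Usub : Subgroup G := ⨆ k, Q k with hU
  have hUcoe : (Usub : Set G) = ⋃ k, (Q k : Set G) :=
    Subgroup.coe_iSup_of_directed hQmono.directed_le
  have hUclosed : IsClosed (Usub : Set G) := by
    rw [hUcoe]
    have hck : ∀ k : ℕ, (Q k : Set G) = ⇑(β ^ k) '' plusPart β (W : Set G) := by
      intro k
      show (mapAut (β ^ k) P : Set G) = _
      rw [coe_mapAut, hP, coe_plusSub]
    rw [Set.iUnion_congr hck]
    exact hcl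
  have hUcomp : IsCompact (Usub : Set G) := hUclosed.isCompact
  haveI hCS : CompactSpace ↥Usub := isCompact_iff_compactSpace.mp hUcomp
  haveI : Nonempty ↥Usub := ⟨1⟩
  set g : ℕ → Set ↥Usub := fun k => (Subtype.val) ⁻¹' (Q k : Set G) with hg
  have hgclosed : ∀ k, IsClosed (g k) := fun k => (isClosed_Q k).preimage continuous_subtype_val
  have hgcover : ⋃ k, g k = Set.univ := by
    ext y
    simp only [Set.mem_iUnion, Set.mem_univ, iff_true, hg, Set.mem_preimage, SetLike.mem_coe]
    have hy := y.2
    rw [← SetLike.mem_coe, hUcoe, Set.mem_iUnion] at hy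
    obtain ⟨k, hk⟩ := hy
    exact ⟨k, hk⟩
  obtain ⟨k₀, x₀, hx₀⟩ := nonempty_interior_of_iUnion_of_closed hgclosed hgcover
  set S : ℕ → Subgroup ↥Usub := fun k => (Q k).subgroupOf Usub with hS
  have hScoe : ∀ k, (S k : Set ↥Usub) = g k := by
    intro k
    ext y
    rw [hS]
    simp only [SetLike.mem_coe, Subgroup.mem_subgroupOf, hg, Set.mem_preimage]
  have hSmono : Monotone S := fun a b hab => Subgroup.comap_mono (hQmono hab)
  have hSopen : ∀ m : ℕ, IsOpen (S (k₀ + m) : Set ↥Usub) := by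
    intro m
    refine Subgroup.isOpen_mono (hSmono (by omega : k₀ ≤ k₀ + m)) ?_
    refine Subgroup.isOpen_of_mem_nhds _ (g := x₀) ?_
    rw [hScoe]
    exact mem_interior_iff_mem_nhds.mp hx₀
  have hd0 : ∀ m : ℕ, (S (k₀ + m)).index ≠ 0 := by
    intro m
    haveI := Subgroup.quotient_finite_of_isOpen (S (k₀ + m)) (hSopen m)
    exact Subgroup.index_ne_zero_of_finite
  have hdvd : ∀ m : ℕ, (S (k₀ + (m + 1))).index ∣ (S (k₀ + m)).index := fun m =>
    Subgroup.index_dvd_of_le (hSmono (by omega))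
  -- find a place where the index stabilizes
  have hne : (Set.range fun m => (S (k₀ + m)).index).Nonempty := ⟨_, 0, rfl⟩
  obtain ⟨m₀, hm₀⟩ := Nat.sInf_mem hne
  have hm₀' : (S (k₀ + m₀)).index = sInf (Set.range fun m => (S (k₀ + m)).index) := hm₀
  have heq : (S (k₀ + (m₀ + 1))).index = (S (k₀ + m₀)).index := by
    refine le_antisymm (Nat.le_of_dvd (Nat.pos_of_ne_zero (hd0 m₀)) (hdvd m₀)) ?_
    rw [hm₀']
    exact Nat.sInf_le ⟨m₀ + 1, rfl⟩
  have hrel := Subgroup.relIndex_mul_index (hSmono (by omega : k₀ + m₀ ≤ k₀ + (m₀ + 1)))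
  rw [heq] at hrel
  have hrel1 : (S (k₀ + m₀)).relIndex (S (k₀ + (m₀ + 1))) = 1 := by
    have hpos : 0 < (S (k₀ + m₀)).index := Nat.pos_of_ne_zero (hd0 m₀)
    refine Nat.eq_of_mul_eq_mul_right hpos ?_
    rw [hrel, one_mul]
  have hSle : S (k₀ + (m₀ + 1)) ≤ S (k₀ + m₀) := Subgroup.relIndex_eq_one.mp hrel1
  set j := k₀ + m₀ with hj
  have hSeq : S j = S (j + 1) :=
    le_antisymm (hSmono (by omega)) hSle
  have hQle : ∀ k, Q k ≤ Usub := fun k => le_iSup Q k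
  have hQeq : Q j = Q (j + 1) := by
    ext z
    constructor
    · intro hz
      have : (⟨z, hQle j hz⟩ : ↥Usub) ∈ S j := by rw [hS]; exact Subgroup.mem_subgroupOf.mpr hz
      rw [hSeq] at this
      rw [hS] at this
      exact Subgroup.mem_subgroupOf.mp this
    · intro hz
      have : (⟨z, hQle (j + 1) hz⟩ : ↥Usub) ∈ S (j + 1) := by
        rw [hS]; exact Subgroup.mem_subgroupOf.mpr hz
      rw [← hSeq] at this
      rw [hS] at this
      exact Subgroup.mem_subgroupOf.mp this
  -- conclude
  ext x
  rw [mem_mapAut]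
  have hA : ∀ y : G, (β ^ j) y ∈ Q j ↔ y ∈ P := by
    intro y
    rw [mem_Q, invpow_apply_pow β (le_refl j), Nat.sub_self, pow_zero]
    simp
  have hB : ∀ y : G, (β ^ j) y ∈ Q (j + 1) ↔ β⁻¹ y ∈ P := by
    intro y
    rw [mem_Q]
    rw [show (β⁻¹ ^ (j + 1)) ((β ^ j) y) = β⁻¹ ((β⁻¹ ^ j) ((β ^ j) y)) by
      rw [pow_succ', MulAut.mul_apply]]
    rw [invpow_apply_pow β (le_refl j), Nat.sub_self, pow_zero]
    simp
  rw [← hB x, ← hQeq, hA x]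

end Stable


section Last
variable [Group G] [TopologicalSpace G] [IsTopologicalGroup G] [CompactSpace G] [T2Space G]

lemma mem_image_aut {β : MulAut G} {s : Set G} {x : G} : x ∈ ⇑β '' s ↔ β⁻¹ x ∈ s := by
  constructor
  · rintro ⟨y, hy, rfl⟩
    simpa using hy
  · intro h
    exact ⟨β⁻¹ x, h, by simp⟩

variable (α : MulAut G) (V : Subgroup G)

lemma coe_AB_inf (hsmall : (⋂ k : ℤ, ⇑(α ^ k) '' (V : Set G)) = ({1} : Set G)) :
    ((Asub α V ⊓ Bsub α V : Subgroup G) : Set G) = {1} := by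
  rw [← hsmall]
  ext x
  rw [Subgroup.coe_inf, Set.mem_inter_iff, SetLike.mem_coe, SetLike.mem_coe,
    mem_Asub, mem_Bsub, Set.mem_iInter]
  constructor
  · rintro ⟨hA, hB⟩ k
    rw [mem_image_aut]
    match k with
    | Int.ofNat 0 => simpa using hB 0
    | Int.ofNat (j + 1) =>
      have : ((α ^ (Int.ofNat (j + 1)))⁻¹ : MulAut G) = α⁻¹ ^ (j + 1) := by
        rw [Int.ofNat_eq_coe, zpow_natCast, inv_pow]
      rw [this]
      exact hA j
    | Int.negSucc i =>
      have : ((α ^ (Int.negSucc i))⁻¹ : MulAut G) = α ^ (i + 1) := by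
        rw [zpow_negSucc, inv_inv]
      rw [this]
      exact hB (i + 1)
  · intro h
    constructor
    · intro i
      have := h ((i + 1 : ℕ) : ℤ)
      rw [mem_image_aut] at this
      rwa [show ((α ^ ((i + 1 : ℕ) : ℤ))⁻¹ : MulAut G) = α⁻¹ ^ (i + 1) by
        rw [zpow_natCast, inv_pow]] at this
    · intro i
      match i with
      | 0 =>
        have := h ((0 : ℕ) : ℤ)
        rw [mem_image_aut] at this
        rwa [show ((α ^ ((0 : ℕ) : ℤ))⁻¹ : MulAut G) = α ^ 0 by
          rw [zpow_natCast, pow_zero, inv_one]] at this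
      | j + 1 =>
        have := h (Int.negSucc j)
        rw [mem_image_aut] at this
        rwa [show ((α ^ (Int.negSucc j))⁻¹ : MulAut G) = α ^ (j + 1) by
          rw [zpow_negSucc, inv_inv]] at this

lemma exists_CB_subset (hαc : Continuous ⇑α) (hαc' : Continuous ⇑α⁻¹)
    (hVo : IsOpen (V : Set G))
    (hsmall : ((Asub α V ⊓ Bsub α V : Subgroup G) : Set G) = {1})
    {U : Set G} (hUo : IsOpen U) (hU1 : (1 : G) ∈ U) :
    ∃ m : ℕ, ((Cc α V m ⊓ Bb α V (m + 1) : Subgroup G) : Set G) ⊆ U := by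
  have hVc : IsClosed (V : Set G) := V.isClosed_of_isOpen hVo
  by_contra hcon
  push_neg at hcon
  set K : ℕ → Set G := fun m =>
    ((Cc α V m ⊓ Bb α V (m + 1) : Subgroup G) : Set G) ∩ Uᶜ with hK
  have hKcl : ∀ m, IsClosed (K m) := by
    intro m
    refine IsClosed.inter ?_ (isClosed_compl_iff.mpr hUo)
    rw [Subgroup.coe_inf]
    exact (isClosed_Cc α V hαc' hVc m).inter (isClosed_Bb α V hαc hVc (m + 1))
  have hKnested : ∀ m, K (m + 1) ⊆ K m := by
    intro m
    refine Set.inter_subset_inter_left _ ?_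
    rw [Subgroup.coe_inf, Subgroup.coe_inf]
    exact Set.inter_subset_inter (Cc_anti α V (by omega)) (Bb_anti α V (by omega))
  have hKne : ∀ m, (K m).Nonempty := by
    intro m
    obtain ⟨x, hx1, hx2⟩ := Set.not_subset.mp (hcon m)
    exact ⟨x, hx1, hx2⟩
  obtain ⟨x, hx⟩ := IsCompact.nonempty_iInter_of_sequence_nonempty_isCompact_isClosed K
    hKnested hKne (hKcl 0).isCompact hKcl
  simp only [Set.mem_iInter] at hx
  have hxAB : x ∈ ((Asub α V ⊓ Bsub α V : Subgroup G) : Set G) := by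
    rw [SetLike.mem_coe, Subgroup.mem_inf]
    constructor
    · rw [Asub, Subgroup.mem_iInf]
      intro n
      exact (Subgroup.mem_inf.mp (SetLike.mem_coe.mp (hx n).1)).1
    · rw [Bsub, Subgroup.mem_iInf]
      intro k
      match k with
      | 0 => exact Subgroup.mem_top x
      | j + 1 => exact (Subgroup.mem_inf.mp (SetLike.mem_coe.mp (hx j).1)).2
  rw [hsmall] at hxAB
  rw [Set.mem_singleton_iff] at hxAB
  exact (hx 0).2 (hxAB ▸ hU1)

lemma image_aut_pow_stable {β : MulAut G} {s : Set G} (hst : ⇑β '' s = s) (n : ℕ) :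
    ⇑(β ^ n) '' s = s := by
  induction n with
  | zero =>
    have : ⇑(β ^ 0 : MulAut G) = id := by funext x; simp
    rw [this, Set.image_id]
  | succ n ih =>
    have : ⇑(β ^ (n + 1) : MulAut G) = ⇑(β ^ n) ∘ ⇑β := by
      funext x; rw [pow_succ, MulAut.mul_apply]; rfl
    rw [this, Set.image_comp, hst, ih]

lemma image_aut_inv_stable {β : MulAut G} {s : Set G} (hst : ⇑β '' s = s) :
    ⇑β⁻¹ '' s = s := by
  ext x
  rw [mem_image_aut, inv_inv]
  conv_lhs => rw [← hst]
  exact β.injective.mem_set_image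

end Last


section Push
variable [Group G] [TopologicalSpace G] [IsTopologicalGroup G] [CompactSpace G] [T2Space G]
variable (α : MulAut G) (V : Subgroup G)

lemma Asub_le (W : Subgroup G) (hst : ⇑α '' (W : Set G) = (W : Set G)) {m : ℕ}
    (hm : ((Cc α V m ⊓ Bb α V (m + 1) : Subgroup G) : Set G) ⊆ (W : Set G)) :
    Asub α V ≤ W := by
  intro a ha
  rw [mem_Asub] at ha
  set w := (α⁻¹ ^ (m + 1)) a with hw
  have hwC : w ∈ Cc α V m := by
    rw [mem_Cc]
    intro i hi
    rw [hw, ap_pow_add]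
    have he : (i + 1) + (m + 1) = (i + m + 1) + 1 := by omega
    rw [he]
    exact ha (i + m + 1)
  have hwB : w ∈ Bb α V (m + 1) := by
    rw [mem_Bb]
    intro i hi
    rw [hw, pow_apply_invpow α (by omega : i ≤ m + 1)]
    have he : m + 1 - i = (m - i) + 1 := by omega
    rw [he]
    exact ha (m - i)
  have hwW : w ∈ (W : Set G) := hm (by
    rw [SetLike.mem_coe, Subgroup.mem_inf]
    exact ⟨hwC, hwB⟩)
  have haw : a = (α ^ (m + 1)) w := by
    rw [hw, pow_apply_invpow α (le_refl (m + 1)), Nat.sub_self, pow_zero]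
    simp
  have : a ∈ ⇑(α ^ (m + 1)) '' (W : Set G) := ⟨w, hwW, haw.symm⟩
  rwa [image_aut_pow_stable hst] at this

lemma Bsub_le (W : Subgroup G) (hst : ⇑α '' (W : Set G) = (W : Set G)) {m : ℕ}
    (hm : ((Cc α V m ⊓ Bb α V (m + 1) : Subgroup G) : Set G) ⊆ (W : Set G)) :
    Bsub α V ≤ W := by
  intro b hb
  rw [mem_Bsub] at hb
  set w := (α ^ m) b with hw
  have hwC : w ∈ Cc α V m := by
    rw [mem_Cc]
    intro i hi
    rw [hw, invpow_apply_pow α (by omega : i + 1 ≤ m)]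
    exact hb (m - (i + 1))
  have hwB : w ∈ Bb α V (m + 1) := by
    rw [mem_Bb]
    intro i hi
    rw [hw, ap_pow_add]
    exact hb (i + m)
  have hwW : w ∈ (W : Set G) := hm (by
    rw [SetLike.mem_coe, Subgroup.mem_inf]
    exact ⟨hwC, hwB⟩)
  have hbw : b = (α⁻¹ ^ m) w := by
    rw [hw, invpow_apply_pow α (le_refl m), Nat.sub_self, pow_zero]
    simp
  have : b ∈ ⇑(α⁻¹ ^ m) '' (W : Set G) := ⟨w, hwW, hbw.symm⟩
  rwa [image_aut_pow_stable (image_aut_inv_stable hst)] at this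

end Push

end NubAux

/-- If the compact pair `(G, α)` has finite depth then `nub α` is open. -/
theorem nub_isOpen_of_finiteDepth
    [Group G] [TopologicalSpace G] [IsTopologicalGroup G] [T2Space G]
    [TotallyDisconnectedSpace G] [CompactSpace G]
    (α : MulAut G) (hαc : Continuous ⇑α) (hαc' : Continuous ⇑(α⁻¹))
    (hfd : ∃ V : Subgroup G, IsOpen (V : Set G) ∧
      (⋂ k : ℤ, ⇑(α ^ k) '' (V : Set G)) = ({1} : Set G)) :
    IsOpen (nub α : Set G) := by
  obtain ⟨V, hVo, hsmall⟩ := hfd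
  obtain ⟨r, hstab⟩ := NubAux.exists_stab α V hαc hαc' hVo
  have hsplit := NubAux.Cc_subset_mul α V hαc hαc' hVo hstab
  have hsmall' := NubAux.coe_AB_inf α V hsmall
  have key : ∀ W : Subgroup G, IsCompact (W : Set G) → IsOpen (W : Set G) →
      Tidy α (W : Set G) → NubAux.Cc α V r ≤ W := by
    intro W hWc hWo htidy
    obtain ⟨hta, htb⟩ := htidy
    have hP : mapAut α (plusSub α W) = plusSub α W :=
      NubAux.mapAut_plusSub_eq α hαc hαc' W hWc htb.1
    have hM : mapAut α⁻¹ (plusSub α⁻¹ W) = plusSub α⁻¹ W :=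
      NubAux.mapAut_plusSub_eq α⁻¹ hαc' (by rw [inv_inv]; exact hαc) W hWc htb.2
    have hplus : ⇑α '' plusPart α (W : Set G) = plusPart α (W : Set G) := by
      rw [← NubAux.coe_plusSub, ← NubAux.coe_mapAut, hP]
    have hminus : ⇑α '' minusPart α (W : Set G) = minusPart α (W : Set G) := by
      have h1 : mapAut α (plusSub α⁻¹ W) = plusSub α⁻¹ W := by
        conv_lhs => rw [← hM]
        rw [NubAux.mapAut_mapAut_inv]
      have h2 : minusPart α (W : Set G) = ((plusSub α⁻¹ W : Subgroup G) : Set G) :=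
        (NubAux.coe_plusSub α⁻¹ W).symm
      rw [h2, ← NubAux.coe_mapAut, h1]
    have hst : ⇑α '' (W : Set G) = (W : Set G) := by
      conv_lhs => rw [hta]
      rw [Set.image_mul, hplus, hminus, ← hta]
    obtain ⟨m, hm⟩ := NubAux.exists_CB_subset α V hαc hαc' hVo hsmall' hWo W.one_mem
    intro x hx
    obtain ⟨a, ha, b, hb, rfl⟩ := hsplit hx
    exact W.mul_mem (NubAux.Asub_le α V W hst hm ha) (NubAux.Bsub_le α V W hst hm hb)
  have hler : NubAux.Cc α V r ≤ nub α :=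
    le_iInf fun W => le_iInf fun hW => key W hW.1 hW.2.1 hW.2.2
  exact Subgroup.isOpen_mono hler (NubAux.isOpen_Cc α V hαc' hVo r)
end
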